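/- arXiv:2510.27290 — 2 statements merged into one kernel-verified Lean document; each statement's English description precedes it below -/
import Mathlib

section
/- Let S = {±a_1,…,±a_n} where 0 < a_1 < … < a_n and gcd(a_1,…,a_n) = 1. If all of a_1,…,a_n are odd, then χ(a_1,…,a_n) = 3. -/
/-- The shift action of `ℤ` on `α^ℤ`: `(s · x)(n) = x(n + s)`. -/
def shift {α : Type*} (s : ℤ) (x : ℤ → α) : ℤ → α := fun n => x (n + s)

/-- The free part `F(2^ℤ)` of the shift action on `2^ℤ = (ℤ → Bool)`. -/
def FreePart : Set (ℤ → Bool) := {x | ∀ s : ℤ, s ≠ 0 → shift s x ≠ x}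

/-- `c` is a Borel proper coloring of the Schreier graph `G_S` on `F(2^ℤ)`,
where `S = {±a : a ∈ A}`: `c` is Borel and `c(x) ≠ c(s · x)` for all `x` and `s ∈ S`. -/
def IsBorelColoring (A : Finset ℕ) {k : ℕ}
    (c : {x : ℤ → Bool // x ∈ FreePart} → Fin k) : Prop :=
  Measurable c ∧
    ∀ (x : {x : ℤ → Bool // x ∈ FreePart}) (a : ℕ), a ∈ A →
      ∀ (h : shift (a : ℤ) x.1 ∈ FreePart), c x ≠ c ⟨shift (a : ℤ) x.1, h⟩

/-- The Borel chromatic number `χ(a₁, …, aₙ)` of the Schreier graph `G_S` on `F(2^ℤ)`,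
where `S = {±a : a ∈ A}`: the least `k` admitting a Borel proper `k`-coloring. -/
noncomputable def borelChromatic (A : Finset ℕ) : ℕ :=
  sInf {k : ℕ | ∃ c : {x : ℤ → Bool // x ∈ FreePart} → Fin k, IsBorelColoring A c}

namespace BCN

abbrev XX : Type := ℤ → Bool

lemma shift_apply {α : Type*} (s : ℤ) (x : ℤ → α) (n : ℤ) : shift s x n = x (n + s) := rfl

@[simp] lemma shift_zero {α : Type*} (x : ℤ → α) : shift 0 x = x := by
  funext n; simp [shift]

lemma shift_shift {α : Type*} (s t : ℤ) (x : ℤ → α) :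
    shift s (shift t x) = shift (s + t) x := by
  funext n; simp [shift, add_assoc]

lemma continuous_shift (s : ℤ) : Continuous (shift s : XX → XX) := by
  exact continuous_pi fun n => continuous_apply (n + s)

def shiftHomeo (s : ℤ) : XX ≃ₜ XX where
  toFun := shift s
  invFun := shift (-s)
  left_inv := fun x => by rw [shift_shift]; simp
  right_inv := fun x => by rw [shift_shift]; simp
  continuous_toFun := continuous_shift s
  continuous_invFun := continuous_shift (-s)

lemma measurable_shift (s : ℤ) : Measurable (shift s : XX → XX) :=
  measurable_pi_lambda _ fun n => measurable_pi_apply (n + s)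

lemma shift_mem_freePart {x : XX} (s : ℤ) (hx : x ∈ FreePart) : shift s x ∈ FreePart := by
  intro t ht h
  apply hx t ht
  have := congrArg (shift (-s)) h
  simp only [shift_shift] at this
  have h2 : -s + (t + s) = t := by ring
  have h3 : -s + s = (0:ℤ) := by ring
  rw [h2, h3, shift_zero] at this
  exact this

lemma shift_mem_freePart_iff {x : XX} (s : ℤ) : shift s x ∈ FreePart ↔ x ∈ FreePart := by
  constructor
  · intro h
    have := shift_mem_freePart (-s) h
    rwa [shift_shift, neg_add_cancel, shift_zero] at this
  · exact shift_mem_freePart s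

lemma measurableSet_pair {i j : ℤ} : MeasurableSet {x : XX | x i = x j} := by
  have : {x : XX | x i = x j} = (fun x : XX => (x i, x j)) ⁻¹' {p : Bool × Bool | p.1 = p.2} := rfl
  rw [this]
  exact ((measurable_pi_apply i).prodMk (measurable_pi_apply j))
    ((Set.toFinite _).measurableSet)

lemma measurableSet_pair_ne {i j : ℤ} : MeasurableSet {x : XX | x i ≠ x j} := by
  have : {x : XX | x i ≠ x j} = {x : XX | x i = x j}ᶜ := rfl
  rw [this]; exact measurableSet_pair.compl

lemma measurableSet_freePart : MeasurableSet FreePart := by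
  have : FreePart = ⋂ s : ℤ, {x : XX | s ≠ 0 → ∃ n : ℤ, x (n + s) ≠ x n} := by
    ext x
    simp only [FreePart, Set.mem_setOf_eq, Set.mem_iInter]
    refine forall_congr' fun s => imp_congr_right fun hs => ?_
    rw [← not_iff_not]
    push_neg
    constructor
    · intro h n; exact congrFun h n
    · intro h; funext n; exact h n
  rw [this]
  refine MeasurableSet.iInter fun s => ?_
  by_cases hs : s = 0
  · simp [hs]
  · have : {x : XX | s ≠ 0 → ∃ n : ℤ, x (n + s) ≠ x n} = ⋃ n : ℤ, {x : XX | x (n + s) ≠ x n} := by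
      ext x; simp [hs]
    rw [this]
    exact MeasurableSet.iUnion fun n => measurableSet_pair_ne

end BCN

namespace BCN

/-! ### The three-coloring pattern arithmetic -/

def colN (m l g : ℕ) : ℕ :=
  if l < 2*m then (if (l+g) % 2 = 0 then 0 else 2)
  else if l < 4*m then (if (l+g) % 2 = 0 then g % 2 else 2)
  else l % 2

lemma colN_lt (m l g : ℕ) : colN m l g < 3 := by
  unfold colN; split_ifs <;> omega

lemma colN_ne_I {m a : ℕ} (ha : a % 2 = 1) (ham : a ≤ m) (l g : ℕ) :
    colN m l g ≠ colN m (l+a) g := by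
  unfold colN; split_ifs <;> omega

lemma colN_ne_II {m a t l : ℕ} (ha : a % 2 = 1) (ham : a ≤ m) (ht1 : 1 ≤ t) (hta : t ≤ a)
    (hg : 6*m ≤ t + l) (g : ℕ) :
    colN m l g ≠ colN m (a - t) (t + l) := by
  unfold colN; split_ifs <;> omega

end BCN

namespace BCN

/-! ### Marker construction -/

section Markers

variable (d : ℕ)

/-- `x`'s window of radius `N` witnesses aperiodicity for all shifts `0 < |j| < d`. -/
def good (N : ℕ) (x : XX) : Prop :=
  ∀ j : ℤ, j ≠ 0 → j.natAbs < d →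
    ∃ i : ℤ, i.natAbs ≤ N ∧ (i + j).natAbs ≤ N ∧ x (i + j) ≠ x i

lemma measurableSet_good (N : ℕ) : MeasurableSet {x : XX | good d N x} := by
  have : {x : XX | good d N x} =
      ⋂ j : ℤ, if j ≠ 0 ∧ j.natAbs < d then
        (⋃ i : ℤ, if i.natAbs ≤ N ∧ (i + j).natAbs ≤ N then {x : XX | x (i + j) ≠ x i} else ∅)
      else Set.univ := by
    ext x
    simp only [good, Set.mem_setOf_eq, Set.mem_iInter]
    refine forall_congr' fun j => ?_
    split_ifs with h
    · simp only [Set.mem_iUnion]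
      constructor
      · rintro hj
        obtain ⟨i, h1, h2, h3⟩ := hj h.1 h.2
        exact ⟨i, by simp [h1, h2, h3]⟩
      · rintro ⟨i, hi⟩ _ _
        split_ifs at hi with h'
        · exact ⟨i, h'.1, h'.2, hi⟩
        · exact hi.elim
    · simp only [Set.mem_univ, iff_true]
      intro h1 h2; exact absurd ⟨h1, h2⟩ h
  rw [this]
  refine MeasurableSet.iInter fun j => ?_
  split_ifs
  · exact MeasurableSet.iUnion fun i => by
      split_ifs
      · exact measurableSet_pair_ne
      · exact MeasurableSet.empty
  · exact MeasurableSet.univ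

lemma exists_good {x : XX} (hx : x ∈ FreePart) : ∃ N, good d N x := by
  classical
  have hw : ∀ j : ℤ, j ≠ 0 → ∃ i : ℤ, x (i + j) ≠ x i := by
    intro j hj
    by_contra h
    push_neg at h
    exact hx j hj (funext fun n => h n)
  let w : ℤ → ℤ := fun j => if h : j ≠ 0 then (hw j h).choose else 0
  refine ⟨(Finset.Icc (-(d:ℤ)) d).sup (fun j => (w j).natAbs ⊔ ((w j) + j).natAbs), ?_⟩
  intro j hj hjd
  refine ⟨w j, ?_, ?_, ?_⟩
  · refine le_trans le_sup_left (Finset.le_sup (f := fun j => (w j).natAbs ⊔ ((w j) + j).natAbs) ?_)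
    simp only [Finset.mem_Icc]; omega
  · refine le_trans le_sup_right (Finset.le_sup (f := fun j => (w j).natAbs ⊔ ((w j) + j).natAbs) ?_)
    simp only [Finset.mem_Icc]; omega
  · simp only [w, dif_pos hj]
    exact (hw j hj).choose_spec

/-- Least good radius. -/
noncomputable def Nfun (x : XX) : ℕ := sInf {N | good d N x}

lemma good_Nfun {x : XX} (hx : x ∈ FreePart) : good d (Nfun d x) x :=
  Nat.sInf_mem (exists_good d hx)

lemma measurableSet_Nfun_fiber (N : ℕ) : MeasurableSet {x : XX | Nfun d x = N} := by
  have : {x : XX | Nfun d x = N} =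
      ({x : XX | good d N x} ∩ ⋂ k : ℕ, ⋂ _ : k < N, {x : XX | good d k x}ᶜ)
      ∪ (if N = 0 then ⋂ k : ℕ, {x : XX | good d k x}ᶜ else ∅) := by
    ext x
    simp only [Set.mem_union, Set.mem_inter_iff, Set.mem_iInter, Set.mem_setOf_eq,
      Set.mem_compl_iff]
    constructor
    · rintro rfl
      by_cases hne : ∃ k, good d k x
      · left
        exact ⟨Nat.sInf_mem hne, fun k hk => Nat.notMem_of_lt_sInf hk⟩
      · right
        push_neg at hne
        have hempty : {N | good d N x} = ∅ := Set.eq_empty_of_forall_notMem hne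
        have h0 : Nfun d x = 0 := by rw [Nfun, hempty, Nat.sInf_empty]
        rw [h0, if_pos rfl]
        simp only [Set.mem_iInter]
        exact fun k => hne k
    · rintro (⟨h1, h2⟩ | h)
      · have : N ∈ {N | good d N x} := h1
        rcases lt_trichotomy (Nfun d x) N with h' | h' | h'
        · exact absurd (Nat.sInf_mem ⟨N, this⟩ : good d (Nfun d x) x) (h2 _ h')
        · exact h'
        · have hle : Nfun d x ≤ N := Nat.sInf_le this
          omega
      · split_ifs at h with hN
        · simp only [Set.mem_iInter] at h
          subst hN
          have : {N | good d N x} = ∅ := Set.eq_empty_of_forall_notMem h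
          rw [Nfun, this, Nat.sInf_empty]
        · exact h.elim
  rw [this]
  refine MeasurableSet.union (MeasurableSet.inter (measurableSet_good d N) ?_) ?_
  · exact MeasurableSet.iInter fun k => MeasurableSet.iInter fun _ =>
      (measurableSet_good d k).compl
  · split_ifs
    · exact MeasurableSet.iInter fun k => (measurableSet_good d k).compl
    · exact MeasurableSet.empty

/-- Stage data: a radius and a window. -/
def Stage : Type := Σ N : ℕ, Fin (2*N+1) → Bool

instance : Countable Stage := by unfold Stage; infer_instance
instance : Nonempty Stage := ⟨⟨0, fun _ => false⟩⟩

/-- The class of a point: same least radius and same window contents. -/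
def Qset (t : Stage) : Set XX :=
  {x | Nfun d x = t.1 ∧ ∀ i : Fin (2*t.1+1), x ((i : ℤ) - t.1) = t.2 i}

lemma measurableSet_Qset (t : Stage) : MeasurableSet (Qset d t) := by
  have : Qset d t = {x : XX | Nfun d x = t.1} ∩
      ⋂ i : Fin (2*t.1+1), {x : XX | x ((i : ℤ) - t.1) = t.2 i} := by
    ext x; simp [Qset, Set.mem_iInter]
  rw [this]
  refine (measurableSet_Nfun_fiber d t.1).inter (MeasurableSet.iInter fun i => ?_)
  have : {x : XX | x ((i : ℤ) - t.1) = t.2 i} =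
      (fun x : XX => x ((i : ℤ) - t.1)) ⁻¹' {t.2 i} := rfl
  rw [this]
  exact (measurable_pi_apply _) (measurableSet_singleton _)

lemma Qset_self {x : XX} : x ∈ Qset d ⟨Nfun d x, fun i => x ((i : ℤ) - Nfun d x)⟩ :=
  ⟨rfl, fun _ => rfl⟩

/-- Two distinct points of the same class are far apart (on the free part). -/
lemma Qset_disc {x : XX} (hx : x ∈ FreePart) {t : Stage} (h1 : x ∈ Qset d t)
    {j : ℤ} (h2 : shift j x ∈ Qset d t) (hj : j ≠ 0) (hjd : j.natAbs < d) : False := by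
  obtain ⟨hN1, hw1⟩ := h1
  obtain ⟨hN2, hw2⟩ := h2
  set N := t.1 with hNdef
  have key : ∀ k : ℤ, k.natAbs ≤ N → x (k + j) = x k := by
    intro k hk
    have hk' : (0:ℤ) ≤ k + N := by omega
    have hk'' : k + N ≤ 2*N := by omega
    have hi : ((k + N).toNat) < 2*N+1 := by omega
    have e1 := hw1 ⟨(k + N).toNat, hi⟩
    have e2 := hw2 ⟨(k + N).toNat, hi⟩
    simp only at e1 e2
    have hcast : (((k + N).toNat : ℤ)) - N = k := by omega
    rw [hcast] at e1 e2
    rw [shift_apply] at e2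
    exact e2.trans e1.symm
  obtain ⟨i, hi1, hi2, hi3⟩ := good_Nfun d hx j hj hjd
  rw [hN1] at hi1 hi2
  exact hi3 (key i hi1)

/-- Enumeration of stages. -/
noncomputable def efun : ℕ → Stage := (exists_surjective_nat Stage).choose

lemma efun_surj : Function.Surjective (efun) := (exists_surjective_nat Stage).choose_spec

/-- Greedy construction of the marker set. -/
noncomputable def Bset : ℕ → Set XX
  | 0 => ∅
  | n+1 => Bset n ∪ (Qset d (efun n) ∩
      {x | ∀ j : ℤ, j ≠ 0 → j.natAbs < d → shift j x ∉ Bset n})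

lemma measurableSet_Bset (n : ℕ) : MeasurableSet (Bset d n) := by
  induction n with
  | zero => exact MeasurableSet.empty
  | succ n ih =>
    refine ih.union ((measurableSet_Qset d _).inter ?_)
    have : {x : XX | ∀ j : ℤ, j ≠ 0 → j.natAbs < d → shift j x ∉ Bset d n} =
        ⋂ j : ℤ, if j ≠ 0 ∧ j.natAbs < d then (shift j) ⁻¹' (Bset d n)ᶜ else Set.univ := by
      ext x
      simp only [Set.mem_setOf_eq, Set.mem_iInter]
      refine forall_congr' fun j => ?_
      split_ifs with h
      · simp only [Set.mem_preimage, Set.mem_compl_iff]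
        exact ⟨fun hh => hh h.1 h.2, fun hh _ _ => hh⟩
      · simp only [Set.mem_univ, iff_true]
        intro h1 h2; exact absurd ⟨h1, h2⟩ h
    rw [this]
    refine MeasurableSet.iInter fun j => ?_
    split_ifs
    · exact (measurable_shift j) ih.compl
    · exact MeasurableSet.univ

lemma Bset_mono : Monotone (Bset d) := by
  refine monotone_nat_of_le_succ fun n => ?_
  rw [Bset]; exact Set.subset_union_left

lemma Bset_disc (n : ℕ) {x : XX} (hx : x ∈ FreePart) (h1 : x ∈ Bset d n)
    {j : ℤ} (h2 : shift j x ∈ Bset d n) (hj : j ≠ 0) (hjd : j.natAbs < d) : False := by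
  induction n with
  | zero => exact h1
  | succ n ih =>
    rw [Bset] at h1 h2
    rcases h1 with h1 | ⟨hq1, he1⟩
    · rcases h2 with h2 | ⟨hq2, he2⟩
      · exact ih h1 h2
      · refine he2 (-j) (by omega) (by omega) ?_
        rwa [shift_shift, neg_add_cancel, shift_zero]
    · rcases h2 with h2 | ⟨hq2, he2⟩
      · exact he1 j hj hjd h2
      · exact Qset_disc d hx hq1 hq2 hj hjd

/-- The marker set. -/
noncomputable def Mset : Set XX := ⋃ n, Bset d n

lemma measurableSet_Mset : MeasurableSet (Mset d) :=
  MeasurableSet.iUnion (measurableSet_Bset d)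

lemma Mset_disc {x : XX} (hx : x ∈ FreePart) (h1 : x ∈ Mset d)
    {j : ℤ} (h2 : shift j x ∈ Mset d) (hj : j ≠ 0) (hjd : j.natAbs < d) : False := by
  obtain ⟨_, ⟨n1, rfl⟩, h1⟩ := h1
  obtain ⟨_, ⟨n2, rfl⟩, h2⟩ := h2
  exact Bset_disc d (max n1 n2) hx (Bset_mono d (le_max_left n1 n2) h1)
    (Bset_mono d (le_max_right n1 n2) h2) hj hjd

lemma Mset_max (hd : 0 < d) {x : XX} (hx : x ∈ FreePart) :
    ∃ j : ℤ, j.natAbs < d ∧ shift j x ∈ Mset d := by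
  by_cases hxM : x ∈ Mset d
  · exact ⟨0, by simpa [hd] using hxM⟩
  obtain ⟨n, hn⟩ := efun_surj ⟨Nfun d x, fun i => x ((i : ℤ) - Nfun d x)⟩
  have hxq : x ∈ Qset d (efun n) := by rw [hn]; exact Qset_self d
  have hxB : x ∉ Bset d (n+1) := fun h => hxM (Set.mem_iUnion.mpr ⟨n+1, h⟩)
  rw [Bset] at hxB
  simp only [Set.mem_union, Set.mem_inter_iff, not_or, not_and] at hxB
  obtain ⟨-, hxB⟩ := hxB
  have := hxB hxq
  simp only [Set.mem_setOf_eq] at this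
  push_neg at this
  obtain ⟨j, hj0, hjd, hjB⟩ := this
  exact ⟨j, hjd, Set.mem_iUnion.mpr ⟨n, hjB⟩⟩

end Markers

end BCN

namespace BCN

section Dist

variable (d : ℕ)

/-- Distance to the nearest marker weakly to the left. -/
noncomputable def lfun (x : XX) : ℕ := sInf {k : ℕ | shift (-(k:ℤ)) x ∈ Mset d}

lemma lfun_nonempty (hd : 0 < d) {x : XX} (hx : x ∈ FreePart) :
    {k : ℕ | shift (-(k:ℤ)) x ∈ Mset d}.Nonempty := by
  obtain ⟨j, hjd, hjM⟩ := Mset_max d hd (x := shift (-(d:ℤ)) x)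
    (shift_mem_freePart _ hx)
  rw [shift_shift] at hjM
  refine ⟨((d:ℤ) - j).toNat, ?_⟩
  simp only [Set.mem_setOf_eq]
  have : -((((d:ℤ) - j).toNat : ℕ) : ℤ) = j + -(d:ℤ) := by omega
  rw [this]
  exact hjM

lemma lfun_mem (hd : 0 < d) {x : XX} (hx : x ∈ FreePart) :
    shift (-(lfun d x : ℤ)) x ∈ Mset d :=
  Nat.sInf_mem (lfun_nonempty d hd hx)

lemma lfun_min {x : XX} {k : ℕ} (h : k < lfun d x) : shift (-(k:ℤ)) x ∉ Mset d :=
  Nat.notMem_of_lt_sInf h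

lemma lfun_eq_of {x : XX} {k : ℕ} (hmem : shift (-(k:ℤ)) x ∈ Mset d)
    (hmin : ∀ j : ℕ, j < k → shift (-(j:ℤ)) x ∉ Mset d) : lfun d x = k := by
  have hne : {k : ℕ | shift (-(k:ℤ)) x ∈ Mset d}.Nonempty := ⟨k, hmem⟩
  have hmem' : shift (-(lfun d x : ℤ)) x ∈ Mset d := Nat.sInf_mem hne
  have hle : lfun d x ≤ k := Nat.sInf_le hmem
  rcases lt_trichotomy (lfun d x) k with h | h | h
  · exact absurd hmem' (hmin _ h)
  · exact h
  · omega

lemma measurableSet_lfun_fiber (k : ℕ) : MeasurableSet {x : XX | lfun d x = k} := by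
  have hS : ∀ n : ℕ, MeasurableSet {x : XX | shift (-(n:ℤ)) x ∈ Mset d} :=
    fun n => (measurable_shift _) (measurableSet_Mset d)
  have : {x : XX | lfun d x = k} =
      ({x : XX | shift (-(k:ℤ)) x ∈ Mset d} ∩
        ⋂ j : ℕ, ⋂ _ : j < k, {x : XX | shift (-(j:ℤ)) x ∈ Mset d}ᶜ)
      ∪ (if k = 0 then ⋂ j : ℕ, {x : XX | shift (-(j:ℤ)) x ∈ Mset d}ᶜ else ∅) := by
    ext x
    simp only [Set.mem_union, Set.mem_inter_iff, Set.mem_iInter, Set.mem_setOf_eq,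
      Set.mem_compl_iff]
    constructor
    · rintro rfl
      by_cases hne : ∃ n : ℕ, shift (-(n:ℤ)) x ∈ Mset d
      · exact Or.inl ⟨Nat.sInf_mem hne, fun j hj => Nat.notMem_of_lt_sInf hj⟩
      · right
        push_neg at hne
        have hempty : {k : ℕ | shift (-(k:ℤ)) x ∈ Mset d} = ∅ :=
          Set.eq_empty_of_forall_notMem hne
        have h0 : lfun d x = 0 := by rw [lfun, hempty, Nat.sInf_empty]
        rw [h0, if_pos rfl]
        simp only [Set.mem_iInter]
        exact fun j => hne j
    · rintro (⟨h1, h2⟩ | h)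
      · exact lfun_eq_of d h1 h2
      · split_ifs at h with hk
        · simp only [Set.mem_iInter] at h
          subst hk
          have hempty : {k : ℕ | shift (-(k:ℤ)) x ∈ Mset d} = ∅ :=
            Set.eq_empty_of_forall_notMem h
          rw [lfun, hempty, Nat.sInf_empty]
        · exact h.elim
  rw [this]
  refine ((hS k).inter (MeasurableSet.iInter fun j =>
    MeasurableSet.iInter fun _ => (hS j).compl)).union ?_
  split_ifs
  · exact MeasurableSet.iInter fun j => (hS j).compl
  · exact MeasurableSet.empty

lemma measurable_lfun : Measurable (lfun d) :=
  measurable_to_countable' fun k => measurableSet_lfun_fiber d k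

/-- The length of the gap ending at the marker weakly left of `x`. -/
noncomputable def Gfun (x : XX) : ℕ := lfun d (shift (-(lfun d x : ℤ) - 1) x) + 1

lemma measurable_Gfun : Measurable (Gfun d) := by
  refine measurable_to_countable' fun g => ?_
  have : (Gfun d) ⁻¹' {g} = ⋃ l : ℕ, {x : XX | lfun d x = l} ∩
      (fun x => shift (-(l : ℤ) - 1) x) ⁻¹' {y : XX | lfun d y + 1 = g} := by
    ext x
    simp only [Set.mem_preimage, Set.mem_singleton_iff, Set.mem_iUnion, Set.mem_inter_iff,
      Set.mem_setOf_eq]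
    constructor
    · intro h; exact ⟨lfun d x, rfl, h⟩
    · rintro ⟨l, hl, h⟩; rw [Gfun, hl]; exact h
  rw [this]
  refine MeasurableSet.iUnion fun l => (measurableSet_lfun_fiber d l).inter ?_
  refine (measurable_shift _) ?_
  have : {y : XX | lfun d y + 1 = g} = ⋃ (l' : ℕ), ⋃ (_ : l' + 1 = g), {y : XX | lfun d y = l'} := by
    ext y
    simp only [Set.mem_setOf_eq, Set.mem_iUnion]
    constructor
    · intro h; exact ⟨lfun d y, h, rfl⟩
    · rintro ⟨l', h1, h2⟩; omega
  rw [this]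
  exact MeasurableSet.iUnion fun l' => MeasurableSet.iUnion fun _ => measurableSet_lfun_fiber d l'

lemma lfun_shift_add (hd : 0 < d) {x : XX} (hx : x ∈ FreePart) (k : ℕ)
    (hnm : ∀ t : ℕ, 1 ≤ t → t ≤ k → shift (t:ℤ) x ∉ Mset d) :
    lfun d (shift (k:ℤ) x) = k + lfun d x := by
  refine lfun_eq_of d ?_ ?_
  · rw [shift_shift]
    have : -((k + lfun d x : ℕ) : ℤ) + k = -(lfun d x : ℤ) := by push_cast; ring
    rw [this]
    exact lfun_mem d hd hx
  · intro j hj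
    rw [shift_shift]
    by_cases hjk : j < k
    · have h1 : -(j:ℤ) + k = ((k - j : ℕ) : ℤ) := by omega
      rw [h1]
      exact hnm (k - j) (by omega) (by omega)
    · have h1 : -(j:ℤ) + k = -(((j - k : ℕ)) : ℤ) := by omega
      rw [h1]
      exact lfun_min d (by omega)

lemma gap_ge (hd : 0 < d) {x : XX} (hx : x ∈ FreePart) : d ≤ Gfun d x := by
  set l := lfun d x with hl
  set y := shift (-(l:ℤ) - 1) x with hy
  have hyfree : y ∈ FreePart := shift_mem_freePart _ hx
  set l2 := lfun d y with hl2
  have hGeq : Gfun d x = l2 + 1 := rfl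
  have hmem2 : shift (-(l2:ℤ)) y ∈ Mset d := lfun_mem d hd hyfree
  rw [hy, shift_shift] at hmem2
  have hmem1 : shift (-(l:ℤ)) x ∈ Mset d := lfun_mem d hd hx
  by_contra hlt
  push_neg at hlt
  rw [hGeq] at hlt
  refine Mset_disc d (x := shift (-(l2:ℤ) + (-(l:ℤ) - 1)) x) (shift_mem_freePart _ hx) hmem2
    (j := (l2:ℤ) + 1) ?_ (by omega) (by omega)
  rw [shift_shift]
  have : (l2:ℤ) + 1 + (-(l2:ℤ) + (-(l:ℤ) - 1)) = -(l:ℤ) := by ring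
  rw [this]
  exact hmem1

end Dist

/-! ### Properness of the coloring -/

theorem col_proper {m : ℕ} (hm : 0 < m) {x : XX} (hx : x ∈ FreePart) {a : ℕ}
    (ha2 : a % 2 = 1) (ham : a ≤ m) :
    colN m (lfun (6*m) x) (Gfun (6*m) x) ≠
      colN m (lfun (6*m) (shift (a:ℤ) x)) (Gfun (6*m) (shift (a:ℤ) x)) := by
  set d := 6*m with hd6
  have hd : 0 < d := by omega
  have ha1 : 1 ≤ a := by omega
  set x' := shift (a:ℤ) x with hx'
  have hx'free : x' ∈ FreePart := shift_mem_freePart _ hx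
  set l := lfun d x with hldef
  set l' := lfun d x' with hl'def
  by_cases hc : l' < a
  · -- Case II : a marker lies in `(0, a]` (relative to `x`)
    obtain ⟨t, htdef⟩ : ∃ t : ℕ, t = a - l' := ⟨_, rfl⟩
    have ht1 : 1 ≤ t := by omega
    have hta : t ≤ a := by omega
    have hmark : shift (t:ℤ) x ∈ Mset d := by
      have := lfun_mem d hd hx'free
      rw [hx', shift_shift] at this
      have he : -(l':ℤ) + a = (t:ℤ) := by omega
      rwa [he] at this
    have hbound : d ≤ t + l := by
      by_contra hlt
      push_neg at hlt
      refine Mset_disc d (x := shift (-(l:ℤ)) x) (shift_mem_freePart _ hx)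
        (lfun_mem d hd hx) (j := (t:ℤ) + l) ?_ (by omega) (by omega)
      rw [shift_shift]
      have : (t:ℤ) + l + -(l:ℤ) = (t:ℤ) := by ring
      rw [this]
      exact hmark
    have hGx' : Gfun d x' = t + l := by
      have hstep : shift (-(l':ℤ) - 1) x' = shift (((t - 1 : ℕ)):ℤ) x := by
        rw [hx', shift_shift]
        have harg : -(l':ℤ) - 1 + a = ((t - 1 : ℕ) : ℤ) := by omega
        rw [harg]
      have hnm : ∀ u : ℕ, 1 ≤ u → u ≤ t - 1 → shift (u:ℤ) x ∉ Mset d := by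
        intro u h1 h2 hu
        refine Mset_disc d (x := shift (u:ℤ) x) (shift_mem_freePart _ hx) hu
          (j := (t:ℤ) - u) ?_ (by omega) (by omega)
        rw [shift_shift]
        have : (t:ℤ) - u + u = (t:ℤ) := by ring
        rw [this]
        exact hmark
      rw [Gfun, ← hl'def, hstep, lfun_shift_add d hd hx (t-1) hnm, ← hldef]
      omega
    have hl'eq : l' = a - t := by omega
    rw [hGx', hl'eq]
    exact colN_ne_II ha2 ham ht1 hta (by omega) _
  · -- Case I : no marker in `(0, a]`
    have hnone : ∀ u : ℕ, 1 ≤ u → u ≤ a → shift (u:ℤ) x ∉ Mset d := by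
      intro u h1 h2 hu
      have hmem : (a - u : ℕ) ∈ {k : ℕ | shift (-(k:ℤ)) x' ∈ Mset d} := by
        simp only [Set.mem_setOf_eq, hx', shift_shift]
        have : -(((a - u : ℕ)):ℤ) + a = (u:ℤ) := by omega
        rwa [this]
      have hle : lfun d x' ≤ a - u := Nat.sInf_le hmem
      omega
    have hl'eq : l' = a + l := by
      rw [hl'def, hx']
      exact lfun_shift_add d hd hx a hnone
    have hG : Gfun d x' = Gfun d x := by
      have e1 : shift (-(l' : ℤ) - 1) x' = shift (-(l : ℤ) - 1) x := by
        rw [hx', shift_shift]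
        have harg : -(l' : ℤ) - 1 + a = -(l:ℤ) - 1 := by
          rw [hl'eq]; push_cast; ring
        rw [harg]
      show lfun d (shift (-(l' : ℤ) - 1) x') + 1 = lfun d (shift (-(l : ℤ) - 1) x) + 1
      rw [e1]
    rw [hG, hl'eq, add_comm a l]
    exact colN_ne_I ha2 ham _ _

end BCN

namespace BCN

theorem three_mem (A : Finset ℕ) (hA : A.Nonempty) (hpos : ∀ a ∈ A, 0 < a)
    (hodd : ∀ a ∈ A, Odd a) :
    ∃ c : {x : ℤ → Bool // x ∈ FreePart} → Fin 3, IsBorelColoring A c := by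
  set m := A.max' hA with hmdef
  have hm : 0 < m := hpos _ (A.max'_mem hA)
  refine ⟨fun x => ⟨colN m (lfun (6*m) x.1) (Gfun (6*m) x.1), colN_lt _ _ _⟩, ?_, ?_⟩
  · have h1 : Measurable fun x : {x : ℤ → Bool // x ∈ FreePart} =>
        (lfun (6*m) x.1, Gfun (6*m) x.1) :=
      ((measurable_lfun _).comp measurable_subtype_coe).prodMk
        ((measurable_Gfun _).comp measurable_subtype_coe)
    exact (measurable_of_countable
      (fun p : ℕ × ℕ => (⟨colN m p.1 p.2, colN_lt _ _ _⟩ : Fin 3))).comp h1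
  · intro x a ha h hEq
    have ha2 : a % 2 = 1 := Nat.odd_iff.mp (hodd a ha)
    have ham : a ≤ m := A.le_max' a ha
    have := congrArg Fin.val hEq
    simp only at this
    exact col_proper hm x.2 ha2 ham this

end BCN

namespace BCN

/-! ### Lower bound: no Borel 2-coloring -/

open Topology Filter

lemma isMeagre_iUnion' {Y : Type*} [TopologicalSpace Y] {ι : Type*} [Countable ι]
    {s : ι → Set Y} (h : ∀ i, IsMeagre (s i)) : IsMeagre (⋃ i, s i) := by
  rw [IsMeagre, Set.compl_iUnion]
  exact countable_iInter_mem.mpr h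

lemma exists_cylinder {U : Set XX} (hU : IsOpen U) {x : XX} (hx : x ∈ U) :
    ∃ F : Finset ℤ, {y : XX | ∀ i ∈ F, y i = x i} ⊆ U := by
  obtain ⟨I, u, h1, h2⟩ := isOpen_pi_iff.mp hU x hx
  refine ⟨I, fun y hy => h2 ?_⟩
  intro i hi
  have hyi : y i = x i := hy i hi
  rw [hyi]
  exact (h1 i hi).2

lemma isMeagre_periodic {s : ℤ} (hs : s ≠ 0) : IsMeagre {x : XX | shift s x = x} := by
  have hC : {x : XX | shift s x = x} = ⋂ n : ℤ, {x : XX | x (n + s) = x n} := by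
    ext x
    simp only [Set.mem_setOf_eq, Set.mem_iInter]
    constructor
    · intro h n; exact congrFun h n
    · intro h; funext n; exact h n
  have hclosed : IsClosed {x : XX | shift s x = x} := by
    rw [hC]
    exact isClosed_iInter fun n => isClosed_eq (continuous_apply (n + s)) (continuous_apply n)
  have hdense : Dense {x : XX | shift s x = x}ᶜ := by
    rw [dense_iff_inter_open]
    rintro U hU ⟨x₀, hx₀⟩
    obtain ⟨F, hF⟩ := exists_cylinder hU hx₀
    set K : ℕ := F.sup (fun i => i.natAbs) with hK
    set n : ℤ := (K : ℤ) + s.natAbs + 1 with hn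
    have hnF : n ∉ F := by
      intro hmem
      have h2 : n.natAbs ≤ K := Finset.le_sup (f := fun i : ℤ => i.natAbs) hmem
      rw [hn] at h2
      omega
    have hnsF : n + s ∉ F := by
      intro hmem
      have h2 : (n + s).natAbs ≤ K := Finset.le_sup (f := fun i : ℤ => i.natAbs) hmem
      rw [hn] at h2
      omega
    classical
    set y : XX := fun i => if i ∈ F then x₀ i else (if i = n then true else false) with hy
    refine ⟨y, ?_, ?_⟩
    · exact hF (fun i hi => by simp [hy, hi])
    · simp only [Set.mem_compl_iff, Set.mem_setOf_eq]
      intro hcontra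
      have h1 : y (n + s) = y n := congrFun hcontra n
      have h2 : y n = true := by simp [hy, hnF]
      have h3 : y (n + s) = false := by
        have hne : n + s ≠ n := by omega
        simp [hy, hnsF, hne]
      rw [h1, h2] at h3
      exact absurd h3 (by simp)
  rw [IsMeagre]
  exact residual_of_dense_open hclosed.isOpen_compl hdense

lemma isMeagre_compl_freePart : IsMeagre FreePartᶜ := by
  have hsub : FreePartᶜ ⊆ ⋃ s : ℤ, {x : XX | s ≠ 0 ∧ shift s x = x} := by
    intro x hx
    simp only [Set.mem_compl_iff, FreePart, Set.mem_setOf_eq] at hx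
    push_neg at hx
    obtain ⟨s, hs, h⟩ := hx
    exact Set.mem_iUnion.mpr ⟨s, hs, h⟩
  refine IsMeagre.mono hsub (isMeagre_iUnion' fun s : ℤ => ?_)
  by_cases hs : s = 0
  · have : {x : XX | s ≠ 0 ∧ shift s x = x} = ∅ := by
      ext x; simp [hs]
    rw [this]; exact IsMeagre.empty
  · exact (isMeagre_periodic hs).mono (fun x hx => hx.2)

lemma dense_shift_union {U : Set XX} (hU : IsOpen U) (hne : U.Nonempty) :
    Dense (⋃ k : ℤ, (fun x => shift (2*k) x) ⁻¹' U) := by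
  rw [dense_iff_inter_open]
  rintro W hW ⟨y₀, hy₀⟩
  obtain ⟨x₀, hx₀⟩ := hne
  obtain ⟨G, hG⟩ := exists_cylinder hW hy₀
  obtain ⟨F, hF⟩ := exists_cylinder hU hx₀
  set KF : ℕ := F.sup (fun i => i.natAbs) with hKF
  set KG : ℕ := G.sup (fun i => i.natAbs) with hKG
  set k : ℤ := (KF : ℤ) + KG + 1 with hk
  have hnotG : ∀ i ∈ F, i + 2*k ∉ G := by
    intro i hi hmem
    have h1 : i.natAbs ≤ KF := Finset.le_sup (f := fun i : ℤ => i.natAbs) hi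
    have h2 : (i + 2*k).natAbs ≤ KG := Finset.le_sup (f := fun i : ℤ => i.natAbs) hmem
    rw [hk] at h2
    omega
  classical
  set z : XX := fun i => if i ∈ G then y₀ i else x₀ (i - 2*k) with hz
  have hzW : z ∈ W := hG fun i hi => by simp only [hz, if_pos hi]
  have hzD : z ∈ ⋃ k : ℤ, (fun x => shift (2*k) x) ⁻¹' U := by
    refine Set.mem_iUnion.mpr ⟨k, ?_⟩
    simp only [Set.mem_preimage]
    refine hF fun i hi => ?_
    have hni := hnotG i hi
    have hz2 : z (i + 2*k) = x₀ i := by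
      simp only [hz, if_neg hni]
      congr 1
      ring
    rw [shift_apply]
    exact hz2
  exact ⟨z, hzW, hzD⟩

lemma comeager_engine {S : Set XX} (hB : MeasurableSet S)
    (hinv : ∀ k : ℤ, (fun x => shift (2*k) x) ⁻¹' S = S) (hnm : ¬ IsMeagre S) :
    IsMeagre Sᶜ := by
  obtain ⟨U, hUo, hSU⟩ := hB.baireMeasurableSet.residualEq_isOpen
  have hE : {x : XX | x ∈ S ↔ x ∈ U} ∈ residual XX := eventuallyEq_set.mp hSU
  have hUne : U.Nonempty := by
    rcases Set.eq_empty_or_nonempty U with hUe | hUne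
    · exfalso
      have hEc : IsMeagre {x : XX | x ∈ S ↔ x ∈ U}ᶜ := by
        rw [IsMeagre, compl_compl]
        exact hE
      refine hnm (hEc.mono ?_)
      intro x hx
      simp only [Set.mem_compl_iff, Set.mem_setOf_eq]
      intro hiff
      rw [hUe] at hiff
      exact (hiff.mp hx)
    · exact hUne
  have hEk : ∀ k : ℤ, (fun x => shift (2*k) x) ⁻¹' {x : XX | x ∈ S ↔ x ∈ U} ∈ residual XX := by
    intro k
    have hmap := (shiftHomeo (2*k)).residual_map_eq
    rw [← hmap] at hE
    exact Filter.mem_map.mp hE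
  set D := ⋃ k : ℤ, (fun x => shift (2*k) x) ⁻¹' U with hD
  have hDdense : Dense D := dense_shift_union hUo hUne
  have hDo : IsOpen D := isOpen_iUnion fun k => hUo.preimage (continuous_shift _)
  have hsub : Sᶜ ⊆ (⋃ k : ℤ, ((fun x => shift (2*k) x) ⁻¹' {x : XX | x ∈ S ↔ x ∈ U})ᶜ) ∪ Dᶜ := by
    intro x hxS
    by_cases hxD : x ∈ D
    · left
      obtain ⟨_, ⟨k, rfl⟩, hk⟩ := hxD
      refine Set.mem_iUnion.mpr ⟨k, ?_⟩
      simp only [Set.mem_compl_iff, Set.mem_preimage, Set.mem_setOf_eq]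
      intro hiff
      have h1 : shift (2*k) x ∈ S := hiff.mpr hk
      have h2 : x ∈ S := by
        rw [← hinv k]; exact h1
      exact hxS h2
    · right; exact hxD
  refine IsMeagre.mono hsub ?_
  have hm1 : IsMeagre (⋃ k : ℤ, ((fun x => shift (2*k) x) ⁻¹' {x : XX | x ∈ S ↔ x ∈ U})ᶜ) :=
    isMeagre_iUnion' fun k => by rw [IsMeagre, compl_compl]; exact hEk k
  have hm2 : IsMeagre Dᶜ := by
    rw [IsMeagre, compl_compl]
    exact residual_of_dense_open hDo hDdense
  rw [IsMeagre, Set.compl_union]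
  exact Filter.inter_mem hm1 hm2

end BCN

namespace BCN

section NoTwo

open Fin.CommRing

variable {c : {x : ℤ → Bool // x ∈ FreePart} → Fin 2}

/-- The set of shifts along which the coloring changes exactly by the parity. -/
def Kprop (c : {x : ℤ → Bool // x ∈ FreePart} → Fin 2) (s : ℤ) : Prop :=
  ∀ (x : XX) (hx : x ∈ FreePart),
    c ⟨shift s x, shift_mem_freePart s hx⟩ = c ⟨x, hx⟩ + ((s : ℤ) : Fin 2)

lemma c_irrel (x : XX) (h1 h2 : x ∈ FreePart) : c ⟨x, h1⟩ = c ⟨x, h2⟩ := rfl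

lemma Kprop_zero : Kprop c 0 := by
  intro x hx
  have h1 : shift (0:ℤ) x = x := shift_zero x
  have : c ⟨shift (0:ℤ) x, shift_mem_freePart 0 hx⟩ = c ⟨x, hx⟩ := by
    congr 1
    exact Subtype.ext h1
  rw [this]
  norm_num

lemma Kprop_add {s t : ℤ} (hs : Kprop c s) (ht : Kprop c t) : Kprop c (s + t) := by
  intro x hx
  have h1 : shift (s + t) x = shift s (shift t x) := (shift_shift s t x).symm
  have e1 : c ⟨shift (s + t) x, shift_mem_freePart _ hx⟩
      = c ⟨shift s (shift t x), shift_mem_freePart s (shift_mem_freePart t hx)⟩ := by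
    congr 1
    exact Subtype.ext h1
  rw [e1, hs (shift t x) (shift_mem_freePart t hx), ht x hx]
  push_cast
  ring

lemma Kprop_neg {s : ℤ} (hs : Kprop c s) : Kprop c (-s) := by
  intro x hx
  have h2 := hs (shift (-s) x) (shift_mem_freePart (-s) hx)
  have h1 : shift s (shift (-s) x) = x := by
    rw [shift_shift]
    simp
  have e1 : c ⟨shift s (shift (-s) x), shift_mem_freePart s (shift_mem_freePart (-s) hx)⟩
      = c ⟨x, hx⟩ := by
    congr 1
    exact Subtype.ext h1
  rw [e1] at h2
  have : c ⟨shift (-s) x, shift_mem_freePart (-s) hx⟩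
      = c ⟨x, hx⟩ + -((s : ℤ) : Fin 2) := by
    rw [h2]; ring
  rw [this]
  push_cast
  ring

/-- The subgroup of parity-compatible shifts. -/
def Ksub (c : {x : ℤ → Bool // x ∈ FreePart} → Fin 2) : AddSubgroup ℤ where
  carrier := {s | Kprop c s}
  zero_mem' := Kprop_zero
  add_mem' := Kprop_add
  neg_mem' := Kprop_neg

lemma Kprop_all (A : Finset ℕ) (hA : A.Nonempty) (hgcd : A.gcd id = 1)
    (hodd : ∀ a ∈ A, Odd a)
    (hcol : ∀ (x : {x : ℤ → Bool // x ∈ FreePart}) (a : ℕ), a ∈ A →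
      ∀ (h : shift (a : ℤ) x.1 ∈ FreePart), c x ≠ c ⟨shift (a : ℤ) x.1, h⟩)
    (s : ℤ) : Kprop c s := by
  have hmemA : ∀ a ∈ A, ((a : ℤ)) ∈ Ksub c := by
    intro a ha
    intro x hx
    have hne := hcol ⟨x, hx⟩ a ha (shift_mem_freePart _ hx)
    have h1 : c ⟨shift (a:ℤ) x, shift_mem_freePart _ hx⟩ = c ⟨x, hx⟩ + 1 := by
      have := hne
      revert this
      generalize c ⟨x, hx⟩ = u
      generalize c ⟨shift (a:ℤ) x, shift_mem_freePart _ hx⟩ = v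
      revert u v
      decide
    rw [h1]
    congr 1
    have ha2 : a % 2 = 1 := Nat.odd_iff.mp (hodd a ha)
    obtain ⟨b, hb⟩ : ∃ b, a = 2*b + 1 := ⟨a/2, by omega⟩
    subst hb
    push_cast
    ring_nf
  obtain ⟨g, hgK⟩ := Int.subgroup_cyclic (Ksub c)
  have hdvd : ∀ a ∈ A, g ∣ (a : ℤ) := by
    intro a ha
    have := hmemA a ha
    rw [hgK, AddSubgroup.mem_closure_singleton] at this
    obtain ⟨n, hn⟩ := this
    exact ⟨n, by rw [← hn, smul_eq_mul]; ring⟩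
  have hnatdvd : g.natAbs ∣ A.gcd id := by
    refine Finset.dvd_gcd fun b hb => ?_
    have h2 := Int.natAbs_dvd_natAbs.mpr (hdvd b hb)
    simpa using h2
  rw [hgcd, Nat.dvd_one] at hnatdvd
  have hg : g = 1 ∨ g = -1 := by omega
  have h1K : (1:ℤ) ∈ Ksub c := by
    rw [hgK, AddSubgroup.mem_closure_singleton]
    rcases hg with h | h
    · exact ⟨1, by simp [h]⟩
    · exact ⟨-1, by simp [h]⟩
  have hsK : s ∈ Ksub c := by
    have := AddSubgroup.zsmul_mem (Ksub c) h1K s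
    simpa using this
  exact hsK

end NoTwo

end BCN

namespace BCN

open Fin.CommRing

theorem no_two_coloring (A : Finset ℕ) (hA : A.Nonempty) (hgcd : A.gcd id = 1)
    (hodd : ∀ a ∈ A, Odd a) :
    ¬ ∃ c : {x : ℤ → Bool // x ∈ FreePart} → Fin 2, IsBorelColoring A c := by
  rintro ⟨c, hmeas, hcol⟩
  have hK : ∀ s : ℤ, Kprop c s := Kprop_all A hA hgcd hodd hcol
  set S : Fin 2 → Set XX := fun b => Subtype.val '' (c ⁻¹' {b}) with hSdef
  have hmem : ∀ (b : Fin 2) (x : XX), x ∈ S b ↔ ∃ hx : x ∈ FreePart, c ⟨x, hx⟩ = b := by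
    intro b x
    constructor
    · rintro ⟨⟨x', hx'⟩, hcx, rfl⟩
      exact ⟨hx', hcx⟩
    · rintro ⟨hx, hcb⟩
      exact ⟨⟨x, hx⟩, hcb, rfl⟩
  have hSm : ∀ b, MeasurableSet (S b) :=
    fun b => MeasurableSet.subtype_image measurableSet_freePart
      (hmeas (measurableSet_singleton b))
  have hcast2 : ∀ k : ℤ, (((2*k : ℤ)) : Fin 2) = 0 := by
    intro k
    push_cast
    ring
  have hpre2 : ∀ (b : Fin 2) (k : ℤ), (fun x => shift (2*k) x) ⁻¹' (S b) = S b := by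
    intro b k
    ext x
    simp only [Set.mem_preimage]
    rw [hmem, hmem]
    constructor
    · rintro ⟨h', hcb⟩
      have hx : x ∈ FreePart := (shift_mem_freePart_iff _).mp h'
      refine ⟨hx, ?_⟩
      have hKk := hK (2*k) x hx
      rw [hcast2 k, add_zero] at hKk
      rw [← hKk]
      exact hcb
    · rintro ⟨hx, hcb⟩
      refine ⟨shift_mem_freePart _ hx, ?_⟩
      have hKk := hK (2*k) x hx
      rw [hcast2 k, add_zero, hcb] at hKk
      exact hKk
  have hfin1 : ∀ v b : Fin 2, v + 1 = b ↔ v = b + 1 := by decide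
  have hpre1 : ∀ b : Fin 2, (fun x => shift 1 x) ⁻¹' (S b) = S (b + 1) := by
    intro b
    ext x
    simp only [Set.mem_preimage]
    rw [hmem, hmem]
    constructor
    · rintro ⟨h', hcb⟩
      have hx : x ∈ FreePart := (shift_mem_freePart_iff _).mp h'
      refine ⟨hx, ?_⟩
      have hKk := hK 1 x hx
      rw [Int.cast_one] at hKk
      rw [hKk] at hcb
      exact (hfin1 _ _).mp hcb
    · rintro ⟨hx, hcb⟩
      refine ⟨shift_mem_freePart _ hx, ?_⟩
      have hKk := hK 1 x hx
      rw [Int.cast_one] at hKk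
      rw [hKk, hcb]
      generalize b = u
      revert u
      decide
  have hdisj : ∀ b : Fin 2, S b ∩ S (b + 1) = ∅ := by
    intro b
    ext x
    simp only [Set.mem_inter_iff, Set.mem_empty_iff_false, iff_false, not_and]
    intro h1 h2
    obtain ⟨hx, e1⟩ := (hmem b x).mp h1
    obtain ⟨hx', e2⟩ := (hmem (b+1) x).mp h2
    have hbb : b = b + 1 := e1.symm.trans e2
    revert hbb
    generalize b = u
    revert u
    decide
  have key : ∀ b : Fin 2, ¬ IsMeagre (S b) → False := by
    intro b hb
    have hcom : IsMeagre (S b)ᶜ := comeager_engine (hSm b) (hpre2 b) hb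
    have hcom1 : IsMeagre (S (b+1))ᶜ := by
      have hpc : (fun x => shift 1 x) ⁻¹' (S b)ᶜ = (S (b+1))ᶜ := by
        rw [Set.preimage_compl, hpre1 b]
      rw [← hpc]
      exact hcom.preimage_of_isOpenMap (continuous_shift 1) (shiftHomeo 1).isOpenMap
    rw [IsMeagre, compl_compl] at hcom hcom1
    have hint := Filter.inter_mem hcom hcom1
    have hne := (dense_of_mem_residual hint).nonempty
    rw [hdisj b] at hne
    exact Set.not_nonempty_empty hne
  by_cases h0 : IsMeagre (S 0)
  · by_cases h1 : IsMeagre (S 1)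
    · have hcover : Set.univ ⊆ S 0 ∪ S 1 ∪ FreePartᶜ := by
        intro x _
        by_cases hx : x ∈ FreePart
        · have hv : c ⟨x,hx⟩ = 0 ∨ c ⟨x,hx⟩ = 1 := by
            generalize c ⟨x,hx⟩ = v
            revert v
            decide
          rcases hv with h | h
          · exact Or.inl (Or.inl ((hmem 0 x).mpr ⟨hx, h⟩))
          · exact Or.inl (Or.inr ((hmem 1 x).mpr ⟨hx, h⟩))
        · exact Or.inr hx
      have hbig : IsMeagre (S 0 ∪ S 1 ∪ FreePartᶜ) := by
        rw [IsMeagre, Set.compl_union, Set.compl_union]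
        exact Filter.inter_mem (Filter.inter_mem h0 h1) isMeagre_compl_freePart
      have huniv : IsMeagre (Set.univ : Set XX) := hbig.mono hcover
      rw [IsMeagre, Set.compl_univ] at huniv
      exact Set.not_nonempty_empty (dense_of_mem_residual huniv).nonempty
    · exact key 1 h1
  · exact key 0 h0

end BCN


/-- If all of `a₁, …, aₙ` are odd, then `χ(a₁,…,aₙ)` is 3. -/
theorem borelChromatic_eq_three_of_all_odd
    (A : Finset ℕ) (hA : A.Nonempty) (hpos : ∀ a ∈ A, 0 < a) (hgcd : A.gcd id = 1)
    (hodd : ∀ a ∈ A, Odd a) :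
    borelChromatic A = 3 := by
  have h3 : 3 ∈ {k : ℕ | ∃ c : {x : ℤ → Bool // x ∈ FreePart} → Fin k, IsBorelColoring A c} :=
    BCN.three_mem A hA hpos hodd
  refine le_antisymm (Nat.sInf_le h3) ?_
  refine le_csInf ⟨3, h3⟩ ?_
  intro k hk
  by_contra hlt
  push_neg at hlt
  have hk2 : k ≤ 2 := by omega
  obtain ⟨c, hcm, hcp⟩ := hk
  refine BCN.no_two_coloring A hA hgcd hodd ⟨fun x => Fin.castLE hk2 (c x), ?_, ?_⟩
  · exact (measurable_of_countable (Fin.castLE hk2)).comp hcm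
  · intro x a ha h hEq
    exact hcp x a ha h (Fin.castLE_injective hk2 hEq)
end

section
/- For every n ≥ 1, χ(1, 2, …, n) = n + 2; that is, for S = {±1, ±2, …, ±n}, there exists a Borel proper (n+2)-coloring of the Schreier graph G_S on F(2^ℤ) but no Borel proper (n+1)-coloring. -/
section Aux

lemma shift_shift (a b : ℤ) (x : ℤ → Bool) : shift a (shift b x) = shift (a + b) x := by
  funext m; simp [shift, add_assoc]

lemma shift_zero (x : ℤ → Bool) : shift 0 x = x := by funext m; simp [shift]

lemma continuous_shift (s : ℤ) : Continuous (shift s : (ℤ → Bool) → (ℤ → Bool)) :=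
  continuous_pi fun m => continuous_apply (m + s)

lemma measurable_shift (s : ℤ) : Measurable (shift s : (ℤ → Bool) → (ℤ → Bool)) :=
  (continuous_shift s).measurable

def shiftHomeo (s : ℤ) : (ℤ → Bool) ≃ₜ (ℤ → Bool) where
  toFun := shift s
  invFun := shift (-s)
  left_inv := fun x => by rw [shift_shift]; simp [shift_zero]
  right_inv := fun x => by rw [shift_shift]; simp [shift_zero]
  continuous_toFun := continuous_shift s
  continuous_invFun := continuous_shift (-s)

lemma shiftHomeo_coe (s : ℤ) : ⇑(shiftHomeo s) = shift s := rfl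

lemma shift_mem_freePart {x : ℤ → Bool} (hx : x ∈ FreePart) (s : ℤ) :
    shift s x ∈ FreePart := by
  intro t ht h
  apply hx t ht
  have := congrArg (shift (-s)) h
  rw [shift_shift, shift_shift] at this
  have h2 : -s + t + s = t := by ring
  have h3 : -s + s = (0:ℤ) := by ring
  rw [h2] at this
  rw [this, shift_shift, h3, shift_zero]

lemma measurableSet_freePart : MeasurableSet FreePart := by
  have : FreePart = ⋂ s : ℤ, {x : ℤ → Bool | s ≠ 0 → shift s x ≠ x} := by
    ext x; simp [FreePart]
  rw [this]
  refine MeasurableSet.iInter fun s => ?_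
  rcases eq_or_ne s 0 with rfl | hs
  · simp
  · have : {x : ℤ → Bool | s ≠ 0 → shift s x ≠ x} = {x : ℤ → Bool | shift s x = x}ᶜ := by
      ext x; simp [hs]
    rw [this]
    apply MeasurableSet.compl
    have : {x : ℤ → Bool | shift s x = x} = ⋂ m : ℤ, {x : ℤ → Bool | x (m + s) = x m} := by
      ext x; simp [funext_iff, shift]
    rw [this]
    exact MeasurableSet.iInter fun m =>
      measurableSet_eq_fun (measurable_pi_apply (m + s)) (measurable_pi_apply m)

lemma isClosed_periodic (s : ℤ) : IsClosed {x : ℤ → Bool | shift s x = x} := by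
  have : {x : ℤ → Bool | shift s x = x} = ⋂ m : ℤ, {x : ℤ → Bool | x (m + s) = x m} := by
    ext x; simp [funext_iff, shift]
  rw [this]
  exact isClosed_iInter fun m => isClosed_eq (continuous_apply (m + s)) (continuous_apply m)

open Topology Set

/-- Cylinder sets. -/
def Cyl (F : Finset ℤ) (σ : ℤ → Bool) : Set (ℤ → Bool) := {x | ∀ i ∈ F, x i = σ i}

lemma isOpen_cyl (F : Finset ℤ) (σ : ℤ → Bool) : IsOpen (Cyl F σ) := by
  have : Cyl F σ = ⋂ i ∈ F, {x : ℤ → Bool | x i = σ i} := by ext x; simp [Cyl]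
  rw [this]
  exact isOpen_biInter_finset fun i _ => by
    have : {x : ℤ → Bool | x i = σ i} = (fun x : ℤ → Bool => x i) ⁻¹' {σ i} := rfl
    rw [this]; exact (continuous_apply i).isOpen_preimage _ (isOpen_discrete _)

lemma cyl_nonempty (F : Finset ℤ) (σ : ℤ → Bool) : (Cyl F σ).Nonempty :=
  ⟨σ, fun _ _ => rfl⟩

/-- every nonempty open set contains a (nonempty) cylinder -/
lemma exists_cyl_subset {U : Set (ℤ → Bool)} (hU : IsOpen U) (hne : U.Nonempty) :
    ∃ F σ, Cyl F σ ⊆ U := by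
  obtain ⟨x, hx⟩ := hne
  obtain ⟨I, u, hu, hsub⟩ := isOpen_pi_iff.1 hU x hx
  refine ⟨I, x, fun y hy => hsub ?_⟩
  intro i hi
  have := hy i hi
  rw [this]
  exact (hu i hi).2

/-- dense complement of periodic points -/
lemma dense_compl_periodic (s : ℤ) (hs : s ≠ 0) :
    Dense {x : ℤ → Bool | shift s x = x}ᶜ := by
  rw [dense_iff_inter_open]
  intro U hU hne
  obtain ⟨F, σ, hsub⟩ := exists_cyl_subset hU hne
  set B : ℕ := F.sup fun i => i.natAbs with hB
  set j : ℤ := (B : ℤ) + (s.natAbs : ℤ) + 1 with hj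
  have hjF : ∀ i ∈ F, (i.natAbs ≤ B) := fun i hi => Finset.le_sup (f := fun i => i.natAbs) hi
  have hjnot : j ∉ F := by
    intro h; have := hjF j h
    have : j.natAbs ≤ B := this
    omega
  have hjsnot : j + s ∉ F := by
    intro h; have := hjF _ h
    have habs : (j + s).natAbs ≤ B := this
    have hs' : s.natAbs ≠ 0 := fun h0 => hs (Int.natAbs_eq_zero.1 h0)
    omega
  have hjne : j ≠ j + s := by omega
  set y : ℤ → Bool := fun i => if i = j then true else if i = j + s then false else σ i with hy
  refine ⟨y, ?_, ?_⟩
  · apply hsub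
    intro i hi
    have h1 : i ≠ j := fun h => hjnot (h ▸ hi)
    have h2 : i ≠ j + s := fun h => hjsnot (h ▸ hi)
    simp [hy, h1, h2]
  · intro (hper : shift s y = y)
    have := congrFun hper j
    simp only [shift] at this
    rw [hy] at this
    simp [hjne, if_neg hjne.symm] at this
    exact hs this

/-- FreePart is comeager. -/
lemma freePart_residual : FreePart ∈ residual (ℤ → Bool) := by
  have : FreePart = ⋂ s : ℤ, {x : ℤ → Bool | s ≠ 0 → shift s x ≠ x} := by
    ext x; simp [FreePart]
  rw [this]
  refine (countable_iInter_mem).2 fun s => ?_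
  rcases eq_or_ne s 0 with rfl | hs
  · simp
  · have : {x : ℤ → Bool | s ≠ 0 → shift s x ≠ x} = {x : ℤ → Bool | shift s x = x}ᶜ := by
      ext x; simp [hs]
    rw [this]
    exact residual_of_dense_open (isClosed_periodic s).isOpen_compl (dense_compl_periodic s hs)

lemma not_isMeagre_of_mem_residual' {s : Set (ℤ → Bool)} (hs : s ∈ residual _) :
    ¬ IsMeagre s := by
  intro hm
  have h2 : s ∩ sᶜ ∈ residual _ := Filter.inter_mem hs hm
  have : Dense (s ∩ sᶜ) := dense_of_mem_residual h2
  rw [inter_compl_self] at this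
  exact (this.nonempty).ne_empty rfl

lemma not_isMeagre_open {U : Set (ℤ → Bool)} (hU : IsOpen U) (hne : U.Nonempty) :
    ¬ IsMeagre U := by
  intro hm
  have : Dense Uᶜ := dense_of_mem_residual hm
  obtain ⟨x, hx1, hx2⟩ := this.inter_open_nonempty U hU hne
  exact hx2 hx1

lemma isMeagre_union {s t : Set (ℤ → Bool)} (hs : IsMeagre s) (ht : IsMeagre t) :
    IsMeagre (s ∪ t) := by
  rw [IsMeagre, compl_union]; exact Filter.inter_mem hs ht

lemma diff_meagre_of_residualEq {s t : Set (ℤ → Bool)} (h : s =ᵇ t) :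
    IsMeagre (s \ t) := by
  rw [IsMeagre]
  refine Filter.mem_of_superset h fun x hx => ?_
  simp only [mem_compl_iff, mem_diff, not_and, not_not]
  intro hs
  exact (Eq.mp (by exact hx) hs)

lemma shift_preimage_cyl (q : ℤ) (F : Finset ℤ) (σ : ℤ → Bool) :
    (shift q) ⁻¹' (Cyl F σ) = Cyl (F.image (· + q)) (fun j => σ (j - q)) := by
  ext x
  simp only [Cyl, mem_preimage, mem_setOf_eq, Finset.mem_image, shift]
  constructor
  · rintro h j ⟨i, hi, rfl⟩
    simpa using h i hi
  · intro h i hi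
    have := h (i + q) ⟨i, hi, rfl⟩
    simpa using this

lemma shift_iterate_preimage (p : ℤ) {A : Set (ℤ → Bool)} (hinv : shift p ⁻¹' A = A)
    (m : ℕ) : shift ((m : ℤ) * p) ⁻¹' A = A := by
  induction m with
  | zero =>
    ext x
    simp only [mem_preimage, Nat.cast_zero, zero_mul]
    rw [shift_zero]
  | succ m ih =>
    have hc : (shift (((m:ℤ)+1) * p) : (ℤ → Bool) → (ℤ → Bool))
        = (shift ((m:ℤ) * p)) ∘ shift p := by
      funext x
      simp only [Function.comp_apply]
      rw [shift_shift]
      ring_nf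
    have : ((m+1 : ℕ) : ℤ) * p = ((m:ℤ)+1) * p := by push_cast; ring
    rw [this, hc, preimage_comp, ih, hinv]

lemma zero_one_law {A : Set (ℤ → Bool)} (hA : BaireMeasurableSet A) (p : ℤ) (hp : p ≠ 0)
    (hinv : shift p ⁻¹' A = A) : IsMeagre A ∨ IsMeagre Aᶜ := by
  by_contra hcon
  push_neg at hcon
  obtain ⟨hA1, hA2⟩ := hcon
  obtain ⟨U, hUo, hAU⟩ := hA.residualEq_isOpen
  obtain ⟨V, hVo, hAV⟩ := hA.compl.residualEq_isOpen
  have hUA : IsMeagre (A \ U) := diff_meagre_of_residualEq hAU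
  have hUA' : IsMeagre (U \ A) := diff_meagre_of_residualEq hAU.symm
  have hVA : IsMeagre (Aᶜ \ V) := diff_meagre_of_residualEq hAV
  have hVA' : IsMeagre (V \ Aᶜ) := diff_meagre_of_residualEq hAV.symm
  have hUne : U.Nonempty := by
    rcases eq_empty_or_nonempty U with rfl | h
    · exact absurd (by simpa using hUA) hA1
    · exact h
  have hVne : V.Nonempty := by
    rcases eq_empty_or_nonempty V with rfl | h
    · exact absurd (by simpa using hVA) hA2
    · exact h
  obtain ⟨F, σ, hCsub⟩ := exists_cyl_subset hUo hUne
  obtain ⟨G, τ, hDsub⟩ := exists_cyl_subset hVo hVne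
  have hCA : IsMeagre (Cyl F σ \ A) := hUA'.mono (diff_subset_diff_left hCsub)
  have hDA : IsMeagre (Cyl G τ \ Aᶜ) := hVA'.mono (diff_subset_diff_left hDsub)
  -- shift the cylinder C far away
  set BF : ℕ := F.sup fun i => i.natAbs with hBF
  set BG : ℕ := G.sup fun i => i.natAbs with hBG
  set m : ℕ := BF + BG + 1 with hm
  set q : ℤ := (m : ℤ) * p with hq
  have hqabs : (m : ℕ) ≤ q.natAbs := by
    have h1 : 1 ≤ p.natAbs := by
      have : p.natAbs ≠ 0 := fun h => hp (Int.natAbs_eq_zero.1 h)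
      omega
    have h2 : q.natAbs = m * p.natAbs := by
      rw [hq, Int.natAbs_mul]; simp
    have h3 : m * 1 ≤ m * p.natAbs := Nat.mul_le_mul_left m h1
    omega
  have hdisj : ∀ i ∈ F, i + q ∉ G := by
    intro i hi hmem
    have h1 : i.natAbs ≤ BF := Finset.le_sup (f := fun i => i.natAbs) hi
    have h2 : (i + q).natAbs ≤ BG := Finset.le_sup (f := fun i => i.natAbs) hmem
    omega
  have hAq : shift q ⁻¹' A = A := by rw [hq]; exact shift_iterate_preimage p hinv m
  have hCA' : IsMeagre (shift q ⁻¹' (Cyl F σ \ A)) := by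
    have := (shiftHomeo q).isOpenMap
    rw [shiftHomeo_coe] at this
    exact hCA.preimage_of_isOpenMap (continuous_shift q) this
  rw [preimage_diff, hAq, shift_preimage_cyl] at hCA'
  set F' : Finset ℤ := F.image (· + q)
  set σ' : ℤ → Bool := fun j => σ (j - q)
  -- E := C' ∩ D is nonempty open
  set w : ℤ → Bool := fun j => if j ∈ F' then σ' j else τ j with hw
  have hwC : w ∈ Cyl F' σ' := by
    intro i hi; simp [hw, hi]
  have hwD : w ∈ Cyl G τ := by
    intro i hi
    have hiF' : i ∉ F' := by
      intro hmem
      obtain ⟨i', hi', rfl⟩ := Finset.mem_image.1 hmem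
      exact hdisj i' hi' hi
    simp [hw, hiF']
  have hEo : IsOpen (Cyl F' σ' ∩ Cyl G τ) := (isOpen_cyl _ _).inter (isOpen_cyl _ _)
  have hEne : (Cyl F' σ' ∩ Cyl G τ).Nonempty := ⟨w, hwC, hwD⟩
  have hEm : IsMeagre (Cyl F' σ' ∩ Cyl G τ) := by
    have hsub : Cyl F' σ' ∩ Cyl G τ ⊆ (Cyl F' σ' \ A) ∪ (Cyl G τ \ Aᶜ) := by
      intro x ⟨hx1, hx2⟩
      by_cases hxA : x ∈ A
      · right; exact ⟨hx2, by simpa using hxA⟩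
      · left; exact ⟨hx1, hxA⟩
    exact (isMeagre_union hCA' hDA).mono hsub
  exact not_isMeagre_open hEo hEne hEm

abbrev FSub := {x : ℤ → Bool // x ∈ FreePart}

def shiftSub (s : ℤ) (x : FSub) : FSub := ⟨shift s x.1, shift_mem_freePart x.2 s⟩

lemma mem_freePart_of_shift {x : ℤ → Bool} {s : ℤ} (h : shift s x ∈ FreePart) :
    x ∈ FreePart := by
  have := shift_mem_freePart h (-s)
  rwa [shift_shift, (by ring : -s + s = (0:ℤ)), shift_zero] at this

/-- adjacency: colors differ at distance between 1 and n -/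
lemma colored_ne {n k : ℕ} (hn : 1 ≤ n) {c : FSub → Fin k}
    (hc : IsBorelColoring (Finset.Icc 1 n) c) (x : FSub) {a b : ℤ} (hab : a ≠ b)
    (habs : (a - b).natAbs ≤ n) : c (shiftSub a x) ≠ c (shiftSub b x) := by
  -- wlog b < a
  have main : ∀ a b : ℤ, b < a → (a - b).natAbs ≤ n →
      c (shiftSub a x) ≠ c (shiftSub b x) := by
    intro a b hlt habs
    set d : ℕ := (a - b).toNat with hd
    have hd1 : 1 ≤ d := by omega
    have hdn : d ≤ n := by omega
    have hmem : d ∈ Finset.Icc 1 n := Finset.mem_Icc.2 ⟨hd1, hdn⟩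
    have h2 := hc.2 (shiftSub b x) d hmem
      (shift_mem_freePart (shiftSub b x).2 (d : ℤ))
    have heq : (⟨shift (d : ℤ) (shiftSub b x).1,
        shift_mem_freePart (shiftSub b x).2 (d : ℤ)⟩ : FSub) = shiftSub a x := by
      apply Subtype.ext
      show shift (d : ℤ) (shift b x.1) = shift a x.1
      rw [shift_shift]
      have : (d:ℤ) + b = a := by omega
      rw [this]
    rw [heq] at h2
    exact (h2).symm
  rcases lt_or_gt_of_ne hab with h | h
  · exact (main b a h (by omega)).symm
  · exact main a b h habs

lemma shiftSub_zero (x : FSub) : shiftSub 0 x = x := Subtype.ext (shift_zero x.1)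

/-- period n+1 -/
lemma color_periodic {n : ℕ} (hn : 1 ≤ n) {c : FSub → Fin (n + 1)}
    (hc : IsBorelColoring (Finset.Icc 1 n) c) (x : FSub) :
    c (shiftSub ((n : ℤ) + 1) x) = c x := by
  classical
  set g : ℕ → Fin (n + 1) := fun m => c (shiftSub (m : ℤ) x) with hg
  set I : Finset ℕ := Finset.Icc 1 n with hI
  set A : Finset (Fin (n + 1)) := I.image g with hA
  have hinj : Set.InjOn g I := by
    intro p hp q hq hpq
    by_contra hne
    simp only [hI, Finset.coe_Icc, Set.mem_Icc] at hp hq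
    refine absurd hpq (colored_ne hn hc x ?_ ?_) <;> omega
  have hcard : A.card = n := by
    rw [hA, Finset.card_image_of_injOn hinj, Nat.card_Icc]; omega
  have h0 : g 0 ∉ A := by
    intro hmem
    obtain ⟨m, hm, hgm⟩ := Finset.mem_image.1 hmem
    rw [hI, Finset.mem_Icc] at hm
    refine absurd hgm (colored_ne hn hc x ?_ ?_) <;> omega
  have h1 : g (n + 1) ∉ A := by
    intro hmem
    obtain ⟨m, hm, hgm⟩ := Finset.mem_image.1 hmem
    rw [hI, Finset.mem_Icc] at hm
    refine absurd hgm (colored_ne hn hc x ?_ ?_) <;> omega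
  have huniv : insert (g 0) A = Finset.univ := by
    apply Finset.eq_univ_of_card
    rw [Finset.card_insert_of_notMem h0, hcard]
    simp
  have : g (n + 1) ∈ insert (g 0) A := by rw [huniv]; exact Finset.mem_univ _
  rcases Finset.mem_insert.1 this with h | h
  · have h' : c (shiftSub ((n + 1 : ℕ) : ℤ) x) = c (shiftSub ((0 : ℕ) : ℤ) x) := h
    push_cast at h'
    rw [shiftSub_zero] at h'
    exact h'
  · exact absurd h h1

/-- The lower bound: no Borel (n+1)-coloring. -/
lemma no_coloring {n : ℕ} (hn : 1 ≤ n) :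
    ¬ ∃ c : FSub → Fin (n + 1), IsBorelColoring (Finset.Icc 1 n) c := by
  rintro ⟨c, hc⟩
  set A : Fin (n + 1) → Set (ℤ → Bool) :=
    fun i => {x | ∃ h : x ∈ FreePart, c ⟨x, h⟩ = i} with hA
  have hAeq : ∀ i, A i = Subtype.val '' (c ⁻¹' {i}) := by
    intro i
    ext x
    simp only [hA, mem_setOf_eq, mem_image, mem_preimage, mem_singleton_iff]
    constructor
    · rintro ⟨h, hc'⟩; exact ⟨⟨x, h⟩, hc', rfl⟩
    · rintro ⟨⟨y, hy⟩, hc', rfl⟩; exact ⟨hy, hc'⟩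
  have hmeas : ∀ i, MeasurableSet (A i) := by
    intro i
    rw [hAeq i]
    exact MeasurableSet.subtype_image measurableSet_freePart
      (hc.1 (measurableSet_singleton i))
  have hinv : ∀ i, shift ((n : ℤ) + 1) ⁻¹' A i = A i := by
    intro i
    ext x
    simp only [hA, mem_preimage, mem_setOf_eq]
    constructor
    · rintro ⟨h, hci⟩
      have hx : x ∈ FreePart := mem_freePart_of_shift h
      refine ⟨hx, ?_⟩
      have := color_periodic hn hc ⟨x, hx⟩
      rw [← this]
      rw [← hci]
      rfl
    · rintro ⟨hx, hci⟩
      refine ⟨shift_mem_freePart hx _, ?_⟩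
      have := color_periodic hn hc ⟨x, hx⟩
      rw [← hci, ← this]
      rfl
  -- some color class is non-meagre
  have hcover : FreePart ⊆ ⋃ i, A i := by
    intro x hx
    exact mem_iUnion.2 ⟨c ⟨x, hx⟩, hx, rfl⟩
  have hexists : ∃ i, ¬ IsMeagre (A i) := by
    by_contra hall
    push_neg at hall
    have : IsMeagre (⋃ i, A i) := by
      rw [IsMeagre, compl_iUnion]
      exact countable_iInter_mem.2 fun i => hall i
    exact not_isMeagre_of_mem_residual' freePart_residual (this.mono hcover)
  obtain ⟨i, hi⟩ := hexists
  have hres : A i ∈ residual _ := by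
    rcases zero_one_law ((hmeas i).baireMeasurableSet) ((n : ℤ) + 1) (by omega) (hinv i) with
      h | h
    · exact absurd h hi
    · rwa [IsMeagre, compl_compl] at h
  have hres2 : shift 1 ⁻¹' A i ∈ residual _ := by
    have hopen : IsOpenMap (shift (1 : ℤ) : (ℤ → Bool) → (ℤ → Bool)) := by
      have := (shiftHomeo 1).isOpenMap
      rwa [shiftHomeo_coe] at this
    have hm : IsMeagre (shift (1:ℤ) ⁻¹' (A i)ᶜ) := by
      have : IsMeagre ((A i)ᶜ) := by rwa [IsMeagre, compl_compl]
      exact this.preimage_of_isOpenMap (continuous_shift 1) hopen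
    rwa [IsMeagre, ← preimage_compl, compl_compl] at hm
  have hdisj : A i ∩ shift 1 ⁻¹' A i = ∅ := by
    ext x
    simp only [hA, mem_inter_iff, mem_preimage, mem_setOf_eq, mem_empty_iff_false, iff_false]
    rintro ⟨⟨hx, hci⟩, ⟨hx', hci'⟩⟩
    have := colored_ne hn hc ⟨x, hx⟩ (by omega : (1:ℤ) ≠ 0) (by simp; omega)
    apply this
    have e1 : shiftSub 1 ⟨x, hx⟩ = (⟨shift 1 x, hx'⟩ : FSub) := Subtype.ext rfl
    have e0 : shiftSub 0 ⟨x, hx⟩ = (⟨x, hx⟩ : FSub) := shiftSub_zero _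
    rw [e1, e0, hci, hci']
  have : Dense (A i ∩ shift 1 ⁻¹' A i) :=
    dense_of_mem_residual (Filter.inter_mem hres hres2)
  rw [hdisj] at this
  exact this.nonempty.ne_empty rfl

/-- index type for centered cylinders -/
def JT : Type := Σ m : ℕ, Fin (2 * m + 1) → Bool

instance : Countable JT := by unfold JT; infer_instance

noncomputable def injJ : JT → ℕ := (exists_injective_nat JT).choose

lemma injJ_inj : Function.Injective injJ := (exists_injective_nat JT).choose_spec

open Classical in
noncomputable def decJ (q : ℕ) : Option JT :=
  if h : ∃ j, injJ j = q then some h.choose else none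

lemma decJ_surj (j : JT) : ∃ q, decJ q = some j := by
  classical
  refine ⟨injJ j, ?_⟩
  have hex : ∃ j', injJ j' = injJ j := ⟨j, rfl⟩
  rw [decJ]
  rw [dif_pos hex]
  exact congrArg some (injJ_inj hex.choose_spec)

def inCyl (x : ℤ → Bool) (j : JT) : Prop :=
  ∀ i : Fin (2 * j.1 + 1), x ((i : ℤ) - (j.1 : ℤ)) = j.2 i

lemma measurableSet_inCyl (j : JT) : MeasurableSet {x : ℤ → Bool | inCyl x j} := by
  have : {x : ℤ → Bool | inCyl x j} = ⋂ i : Fin (2 * j.1 + 1),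
      {x : ℤ → Bool | x ((i : ℤ) - (j.1 : ℤ)) = j.2 i} := by
    ext x; simp [inCyl]
  rw [this]
  exact MeasurableSet.iInter fun i =>
    (measurable_pi_apply _) (measurableSet_singleton _)

def goodJ (N : ℕ) (x : ℤ → Bool) (j : JT) : Prop :=
  inCyl x j ∧ ∀ k : ℤ, k ≠ 0 → k.natAbs ≤ N → ¬ inCyl (shift k x) j

lemma measurableSet_goodJ (N : ℕ) (j : JT) :
    MeasurableSet {x : ℤ → Bool | goodJ N x j} := by
  have : {x : ℤ → Bool | goodJ N x j} = {x | inCyl x j} ∩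
      ⋂ k : ℤ, {x : ℤ → Bool | k ≠ 0 → k.natAbs ≤ N → ¬ inCyl (shift k x) j} := by
    ext x; simp [goodJ]
  rw [this]
  refine (measurableSet_inCyl j).inter (MeasurableSet.iInter fun k => ?_)
  by_cases h1 : k ≠ 0 ∧ k.natAbs ≤ N
  · have : {x : ℤ → Bool | k ≠ 0 → k.natAbs ≤ N → ¬ inCyl (shift k x) j}
        = (shift k) ⁻¹' {x | inCyl x j}ᶜ := by
      ext x; simp [h1.1, h1.2]
    rw [this]
    exact measurable_shift k (measurableSet_inCyl j).compl
  · have : {x : ℤ → Bool | k ≠ 0 → k.natAbs ≤ N → ¬ inCyl (shift k x) j} = univ := by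
      ext x
      simp only [mem_setOf_eq, mem_univ, iff_true]
      intro h2 h3
      exact absurd ⟨h2, h3⟩ h1
    rw [this]; exact MeasurableSet.univ

/-- every free point has a good cylinder index -/
lemma exists_goodJ (N : ℕ) {x : ℤ → Bool} (hx : x ∈ FreePart) :
    ∃ j : JT, goodJ N x j := by
  classical
  -- witness coordinates of difference
  have hne : ∀ k : ℤ, k ≠ 0 → shift k x ≠ x := fun k hk => hx k hk
  set d : ℤ → ℤ := fun k => if h : shift k x ≠ x then (Function.ne_iff.1 h).choose else 0
    with hd
  have hdspec : ∀ k : ℤ, k ≠ 0 → shift k x (d k) ≠ x (d k) := by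
    intro k hk
    have h := hne k hk
    simp only [hd, dif_pos h]
    exact (Function.ne_iff.1 h).choose_spec
  set m : ℕ := (Finset.Icc (-(N:ℤ)) (N:ℤ)).sup (fun k => (d k).natAbs) with hm
  have hdm : ∀ k : ℤ, k.natAbs ≤ N → (d k).natAbs ≤ m := by
    intro k hk
    exact Finset.le_sup (f := fun k => (d k).natAbs) (Finset.mem_Icc.2 (by omega))
  refine ⟨⟨m, fun i => x ((i : ℤ) - (m : ℤ))⟩, ?_, ?_⟩
  · intro i; rfl
  · intro k hk hkN hcyl
    have hd1 := hdspec k hk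
    have hd2 := hdm k hkN
    -- coordinate d k is covered by the cylinder
    set i : ℕ := (d k + m).toNat with hi
    have hilt : i < 2 * m + 1 := by omega
    have := hcyl ⟨i, hilt⟩
    simp only at this
    have hco : ((⟨i, hilt⟩ : Fin (2 * m + 1)) : ℤ) - (m : ℤ) = d k := by
      simp only [hi]
      omega
    rw [hco] at this
    exact hd1 this

/-- points whose cylinder index `q` is good -/
noncomputable def GoodQ (N q : ℕ) : Set (ℤ → Bool) :=
  FreePart ∩ {x | (decJ q).elim False (goodJ N x)}

/-- points whose least good index is `q` -/
noncomputable def WQ (N q : ℕ) : Set (ℤ → Bool) :=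
  GoodQ N q ∩ ⋂ (q' : ℕ) (_ : q' < q), (GoodQ N q')ᶜ

/-- the greedy stages -/
noncomputable def Mst (N : ℕ) : ℕ → Set (ℤ → Bool) := fun q =>
  Nat.rec (WQ N 0)
    (fun q Mprev => Mprev ∪
      (WQ N (q+1) ∩ {x | ∀ k : ℤ, k ≠ 0 → k.natAbs ≤ N → shift k x ∉ Mprev}))
    q

/-- the Borel marker set -/
noncomputable def Markers (N : ℕ) : Set (ℤ → Bool) := ⋃ q, Mst N q

lemma Mst_zero (N : ℕ) : Mst N 0 = WQ N 0 := rfl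

lemma Mst_succ (N q : ℕ) : Mst N (q+1) = Mst N q ∪
    (WQ N (q+1) ∩ {x | ∀ k : ℤ, k ≠ 0 → k.natAbs ≤ N → shift k x ∉ Mst N q}) := rfl

lemma measurableSet_goodQ (N q : ℕ) : MeasurableSet (GoodQ N q) := by
  refine measurableSet_freePart.inter ?_
  rcases h : decJ q with _ | j
  · have h2 : {x : ℤ → Bool | (decJ q).elim False (goodJ N x)} = ∅ := by
      ext x; simp [h]
    rw [show {x : ℤ → Bool | Option.elim none False (goodJ N x)} = ∅ by ext x; simp]
    exact MeasurableSet.empty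
  · rw [show {x : ℤ → Bool | (some j).elim False (goodJ N x)} = {x | goodJ N x j} by
      ext x; simp]
    exact measurableSet_goodJ N j

lemma measurableSet_WQ (N q : ℕ) : MeasurableSet (WQ N q) :=
  (measurableSet_goodQ N q).inter (MeasurableSet.iInter fun q' =>
    MeasurableSet.iInter fun _ => (measurableSet_goodQ N q').compl)

lemma measurableSet_Mst (N q : ℕ) : MeasurableSet (Mst N q) := by
  induction q with
  | zero => exact measurableSet_WQ N 0
  | succ q ih =>
    rw [Mst_succ]
    refine ih.union ((measurableSet_WQ N (q+1)).inter ?_)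
    have : {x : ℤ → Bool | ∀ k : ℤ, k ≠ 0 → k.natAbs ≤ N → shift k x ∉ Mst N q}
        = ⋂ k : ℤ, {x : ℤ → Bool | k ≠ 0 → k.natAbs ≤ N → shift k x ∉ Mst N q} := by
      ext x; simp
    rw [this]
    refine MeasurableSet.iInter fun k => ?_
    by_cases h1 : k ≠ 0 ∧ k.natAbs ≤ N
    · have : {x : ℤ → Bool | k ≠ 0 → k.natAbs ≤ N → shift k x ∉ Mst N q}
          = (shift k) ⁻¹' (Mst N q)ᶜ := by
        ext x; simp [h1.1, h1.2]
      rw [this]; exact measurable_shift k ih.compl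
    · have : {x : ℤ → Bool | k ≠ 0 → k.natAbs ≤ N → shift k x ∉ Mst N q} = Set.univ := by
        ext x
        simp only [Set.mem_setOf_eq, Set.mem_univ, iff_true]
        intro h2 h3; exact absurd ⟨h2, h3⟩ h1
      rw [this]; exact MeasurableSet.univ

lemma measurableSet_markers (N : ℕ) : MeasurableSet (Markers N) :=
  MeasurableSet.iUnion fun q => measurableSet_Mst N q

lemma WQ_subset_freePart (N q : ℕ) : WQ N q ⊆ FreePart :=
  fun _ h => h.1.1

lemma Mst_subset_freePart (N q : ℕ) : Mst N q ⊆ FreePart := by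
  induction q with
  | zero => exact WQ_subset_freePart N 0
  | succ q ih =>
    rw [Mst_succ]
    exact Set.union_subset ih fun x hx => (WQ_subset_freePart N (q+1)) hx.1

lemma markers_subset_freePart (N : ℕ) : Markers N ⊆ FreePart :=
  Set.iUnion_subset fun q => Mst_subset_freePart N q

/-- within one W-class, no two points are close -/
lemma WQ_indep (N q : ℕ) {x : ℤ → Bool} (hx : x ∈ WQ N q) {k : ℤ} (hk : k ≠ 0)
    (hkN : k.natAbs ≤ N) : shift k x ∉ WQ N q := by
  intro hy
  obtain ⟨⟨_, hgx⟩, _⟩ := hx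
  obtain ⟨⟨_, hgy⟩, _⟩ := hy
  rcases h : decJ q with _ | j
  · rw [h] at hgx; exact hgx
  · rw [h] at hgx hgy
    simp only [Option.elim] at hgx hgy
    exact hgx.2 k hk hkN hgy.1

lemma Mst_indep (N q : ℕ) {x : ℤ → Bool} (hx : x ∈ Mst N q) {k : ℤ} (hk : k ≠ 0)
    (hkN : k.natAbs ≤ N) : shift k x ∉ Mst N q := by
  induction q with
  | zero => exact fun hy => WQ_indep N 0 hx hk hkN hy
  | succ q ih =>
    rw [Mst_succ] at hx ⊢
    intro hy
    rcases hx with hx | ⟨hxW, hxg⟩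
    · rcases hy with hy | ⟨hyW, hyg⟩
      · exact ih hx hy
      · -- shift k x is new, so its neighbours avoid Mst N q; but shift (-k) (shift k x) = x
        have := hyg (-k) (by omega) (by omega)
        rw [shift_shift, (by ring : -k + k = (0:ℤ)), shift_zero] at this
        exact this hx
    · rcases hy with hy | ⟨hyW, hyg⟩
      · exact hxg k hk hkN hy
      · exact WQ_indep N (q+1) hxW hk hkN hyW

lemma Mst_mono (N : ℕ) {q q' : ℕ} (h : q ≤ q') : Mst N q ⊆ Mst N q' := by
  induction q' with
  | zero => rw [Nat.le_zero.1 h]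
  | succ q' ih =>
    rcases Nat.eq_or_lt_of_le h with rfl | h'
    · rfl
    · rw [Mst_succ]
      exact (ih (by omega)).trans Set.subset_union_left

lemma markers_indep (N : ℕ) {x : ℤ → Bool} (hx : x ∈ Markers N) {k : ℤ} (hk : k ≠ 0)
    (hkN : k.natAbs ≤ N) : shift k x ∉ Markers N := by
  intro hy
  obtain ⟨_, ⟨q, rfl⟩, hxq⟩ := hx
  obtain ⟨_, ⟨q', rfl⟩, hyq⟩ := hy
  rcases le_total q q' with h | h
  · exact Mst_indep N q' (Mst_mono N h hxq) hk hkN hyq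
  · have hx' : x ∈ Mst N q := hxq
    have hy' : shift k x ∈ Mst N q' := hyq
    exact Mst_indep N q hx' hk hkN (Mst_mono N h hy')

lemma markers_cover (N : ℕ) {x : ℤ → Bool} (hx : x ∈ FreePart) :
    ∃ k : ℤ, k.natAbs ≤ N ∧ shift k x ∈ Markers N := by
  classical
  have hgood : ∃ q, x ∈ GoodQ N q := by
    obtain ⟨j, hj⟩ := exists_goodJ N hx
    obtain ⟨q, hq⟩ := decJ_surj j
    exact ⟨q, hx, by rw [Set.mem_setOf_eq, hq]; exact hj⟩
  obtain ⟨q0, hq0, hmin⟩ : ∃ q0, x ∈ GoodQ N q0 ∧ ∀ q' < q0, x ∉ GoodQ N q' :=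
    ⟨Nat.find hgood, Nat.find_spec hgood, fun q' h' => Nat.find_min hgood h'⟩
  have hW : x ∈ WQ N q0 := ⟨hq0, by
    refine Set.mem_iInter.2 fun q' => Set.mem_iInter.2 fun h' => ?_
    exact hmin q' h'⟩
  by_contra hno
  push_neg at hno
  have hxnot : x ∉ Markers N := by
    have := hno 0 (by simp)
    rwa [shift_zero] at this
  have hguard : ∀ k : ℤ, k ≠ 0 → k.natAbs ≤ N → shift k x ∉ Mst N (q0 - 1) := by
    intro k _ hkN hmem
    exact hno k hkN (Set.mem_iUnion.2 ⟨q0 - 1, hmem⟩)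
  rcases Nat.eq_zero_or_pos q0 with h0 | h0
  · apply hxnot
    refine Set.mem_iUnion.2 ⟨0, ?_⟩
    rw [Mst_zero, ← h0]
    exact hW
  · apply hxnot
    obtain ⟨q', rfl⟩ : ∃ q', q0 = q' + 1 := ⟨q0 - 1, by omega⟩
    refine Set.mem_iUnion.2 ⟨q' + 1, ?_⟩
    rw [Mst_succ]
    right
    refine ⟨hW, fun k hk hkN => ?_⟩
    have := hguard k hk hkN
    simpa using this

lemma exists_left_marker (N : ℕ) (x : FSub) :
    ∃ k : ℕ, shift (-(k : ℤ)) x.1 ∈ Markers N := by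
  obtain ⟨k, hk, hmem⟩ := markers_cover N (shift_mem_freePart x.2 (-(N : ℤ)))
  rw [shift_shift] at hmem
  refine ⟨(N - k).toNat, ?_⟩
  have : -(((N - k).toNat : ℕ) : ℤ) = k + -(N:ℤ) := by omega
  rw [this]
  exact hmem

lemma exists_right_marker (N : ℕ) (x : FSub) :
    ∃ k : ℕ, 1 ≤ k ∧ shift (k : ℤ) x.1 ∈ Markers N := by
  obtain ⟨k, hk, hmem⟩ := markers_cover N (shift_mem_freePart x.2 ((N : ℤ) + 1))
  rw [shift_shift] at hmem
  refine ⟨(k + N + 1).toNat, by omega, ?_⟩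
  have : (((k + N + 1).toNat : ℕ) : ℤ) = k + ((N:ℤ) + 1) := by omega
  rw [this]
  exact hmem

open Classical in
noncomputable def rD (N : ℕ) (x : FSub) : ℕ := Nat.find (exists_left_marker N x)

open Classical in
noncomputable def nX (N : ℕ) (x : FSub) : ℕ := Nat.find (exists_right_marker N x)

noncomputable def LG (N : ℕ) (x : FSub) : ℕ := rD N x + nX N x

open Classical

lemma rD_spec (N : ℕ) (x : FSub) : shift (-(rD N x : ℤ)) x.1 ∈ Markers N :=
  Nat.find_spec (exists_left_marker N x)

lemma rD_min (N : ℕ) (x : FSub) {k : ℕ} (h : k < rD N x) :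
    shift (-(k : ℤ)) x.1 ∉ Markers N :=
  Nat.find_min (exists_left_marker N x) h

lemma nX_spec (N : ℕ) (x : FSub) :
    1 ≤ nX N x ∧ shift ((nX N x : ℕ) : ℤ) x.1 ∈ Markers N :=
  Nat.find_spec (exists_right_marker N x)

lemma nX_min (N : ℕ) (x : FSub) {k : ℕ} (h1 : 1 ≤ k) (h : k < nX N x) :
    shift ((k : ℕ) : ℤ) x.1 ∉ Markers N :=
  fun hmem => Nat.find_min (exists_right_marker N x) h ⟨h1, hmem⟩

/-- gap length is > N -/
lemma LG_gt (N : ℕ) (x : FSub) : N < LG N x := by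
  by_contra h
  push_neg at h
  have hLG : LG N x = rD N x + nX N x := rfl
  have hnx1 := (nX_spec N x).1
  have h1 := rD_spec N x
  have h2 := (nX_spec N x).2
  have h4 := markers_indep N h1 (k := ((rD N x : ℤ) + nX N x)) (by omega) (by omega)
  apply h4
  rw [shift_shift]
  have e : (rD N x : ℤ) + nX N x + -(rD N x) = ((nX N x : ℕ) : ℤ) := by ring
  rw [e]
  exact h2

def shiftS (s : ℤ) (x : FSub) : FSub := ⟨shift s x.1, shift_mem_freePart x.2 s⟩

/-- case A : shifting by s < nX -/
lemma rD_shift_lt (N : ℕ) (x : FSub) {s : ℕ} (hs : s < nX N x) :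
    rD N (shiftS (s : ℤ) x) = rD N x + s := by
  rw [rD, Nat.find_eq_iff]
  constructor
  · show shift (-(((rD N x + s : ℕ) : ℕ) : ℤ)) (shift (s:ℤ) x.1) ∈ Markers N
    rw [shift_shift]
    have : -(((rD N x + s : ℕ) : ℕ) : ℤ) + (s:ℤ) = -(rD N x : ℤ) := by push_cast; ring
    rw [this]
    exact rD_spec N x
  · intro k hk
    show ¬ shift (-(k : ℤ)) (shift (s:ℤ) x.1) ∈ Markers N
    rw [shift_shift]
    intro hmem
    rcases lt_trichotomy (k : ℤ) (s : ℤ) with h | h | h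
    · -- marker at position s - k ≥ 1 : contradicts nX_min
      have := nX_min N x (k := (s - k : ℕ)) (by omega) (by omega)
      apply this
      have e : (((s - k : ℕ) : ℕ) : ℤ) = -(k:ℤ) + s := by omega
      rw [e]
      exact hmem
    · -- k = s : marker at 0, so rD N x = 0, contradicting k < rD + s
      have hx : x.1 ∈ Markers N := by
        have e : -(k:ℤ) + s = 0 := by omega
        rw [e, shift_zero] at hmem
        exact hmem
      have hr0 : rD N x = 0 := by
        by_contra hpos
        apply rD_min N x (k := 0) (by omega)
        have e : (-((0:ℕ):ℤ)) = (0:ℤ) := by norm_num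
        rw [e, shift_zero]
        exact hx
      omega
    · have := rD_min N x (k := (k - s : ℕ)) (by omega)
      apply this
      have e : (-(((k - s: ℕ) : ℕ) : ℤ)) = -(k:ℤ) + s := by omega
      rw [e]
      exact hmem

lemma nX_shift_lt (N : ℕ) (x : FSub) {s : ℕ} (hs : s < nX N x) :
    nX N (shiftS (s : ℤ) x) = nX N x - s := by
  rw [nX, Nat.find_eq_iff]
  constructor
  · refine ⟨by omega, ?_⟩
    show shift (((nX N x - s : ℕ) : ℕ) : ℤ) (shift (s:ℤ) x.1) ∈ Markers N
    rw [shift_shift]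
    have : (((nX N x - s : ℕ) : ℕ) : ℤ) + (s : ℤ) = ((nX N x : ℕ) : ℤ) := by
      have := (nX_spec N x).1; omega
    rw [this]
    exact (nX_spec N x).2
  · rintro k hk ⟨hk1, hmem⟩
    show False
    have hmem' : shift ((k:ℕ) : ℤ) (shift (s:ℤ) x.1) ∈ Markers N := hmem
    rw [shift_shift] at hmem'
    have := nX_min N x (k := k + s) (by omega) (by omega)
    apply this
    have e : (((k + s : ℕ) : ℕ) : ℤ) = (k:ℤ) + s := by omega
    rw [e]
    exact hmem'

/-- case B : shifting by s ≥ nX (but s ≤ N) -/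
lemma rD_shift_ge (N : ℕ) (x : FSub) {s : ℕ} (hs : nX N x ≤ s) (hsN : s ≤ N) :
    rD N (shiftS (s : ℤ) x) = s - nX N x := by
  have hnx1 := (nX_spec N x).1
  rw [rD, Nat.find_eq_iff]
  constructor
  · show shift (-(((s - nX N x : ℕ) : ℕ) : ℤ)) (shift (s:ℤ) x.1) ∈ Markers N
    rw [shift_shift]
    have : (-(((s - nX N x : ℕ) : ℕ) : ℤ)) + (s:ℤ) = ((nX N x : ℕ) : ℤ) := by omega
    rw [this]
    exact (nX_spec N x).2
  · intro k hk
    show ¬ shift (-(k : ℤ)) (shift (s:ℤ) x.1) ∈ Markers N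
    rw [shift_shift]
    intro hmem
    -- marker at position t := s - k with nX < t ≤ s ≤ N
    have h2 := (nX_spec N x).2
    have := markers_indep N h2 (k := (s : ℤ) - k - nX N x) (by omega) (by omega)
    apply this
    rw [shift_shift]
    have e : (s:ℤ) - k - nX N x + nX N x = -(k:ℤ) + s := by ring
    rw [e]
    exact hmem

/-! ### the color words -/

/-- color of offset `r` in a gap decomposed as `a` copies of `0..n` then copies of `0..n+1` -/
def colW (n a r : ℕ) : ℕ :=
  if r < a * (n+1) then r % (n+1) else (r - a * (n+1)) % (n+2)

lemma colW_lt (n a r : ℕ) : colW n a r < n + 2 := by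
  rw [colW]
  split_ifs
  · exact lt_of_lt_of_le (Nat.mod_lt _ (by omega)) (by omega)
  · exact Nat.mod_lt _ (by omega)

def aL (n L : ℕ) : ℕ := (L - (L % (n+1)) * (n+2)) / (n+1)

def colF (n : ℕ) (r L : ℕ) : Fin (n+2) := ⟨colW n (aL n L) r, colW_lt n (aL n L) r⟩

lemma aL_spec (n L : ℕ) (hL : (n+1) * (n+1) ≤ L) :
    1 ≤ aL n L ∧ (aL n L) * (n+1) + (L % (n+1)) * (n+2) = L := by
  obtain ⟨b, hb⟩ : ∃ b, L % (n+1) = b := ⟨_, rfl⟩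
  obtain ⟨Q, hQ⟩ : ∃ Q, L / (n+1) = Q := ⟨_, rfl⟩
  have hb1 : b < n + 1 := by rw [← hb]; exact Nat.mod_lt _ (by omega)
  have hdm : (n+1) * Q + b = L := by rw [← hb, ← hQ]; exact Nat.div_add_mod L (n+1)
  have hQn : n + 1 ≤ Q := by
    rw [← hQ, Nat.le_div_iff_mul_le (by omega : 0 < n + 1)]
    exact hL
  obtain ⟨D, hD⟩ : ∃ D, Q = D + b := ⟨Q - b, by omega⟩
  subst hD
  have r1 : (n+1) * (D + b) = (n+1) * D + (n+1) * b := by ring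
  rw [r1] at hdm
  have r2 : b * (n+2) = (n+1) * b + b := by ring
  have key : L - b * (n+2) = (n+1) * D := by omega
  have ha : aL n L = D := by
    rw [aL, hb, key, Nat.mul_div_cancel_left _ (by omega : 0 < n + 1)]
  have r3 : D * (n+1) = (n+1) * D := by ring
  rw [ha, hb]
  constructor
  · omega
  · omega

/-- small distinct residues -/
lemma mod_ne_of_small {m k s : ℕ} (h1 : 0 < s) (h2 : s < m) : k % m ≠ (k + s) % m := by
  intro h
  have hmod : k ≡ k + s [MOD m] := h
  have hdvd : m ∣ (k + s - k) := (Nat.modEq_iff_dvd' (by omega)).1 hmod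
  have : m ∣ s := by simpa using hdvd
  have := Nat.le_of_dvd h1 this
  omega

/-- mod in an explicit window -/
lemma mod_window {m q r : ℕ} (h1 : q * m ≤ r) (h2 : r < q * m + m) : r % m = r - q * m := by
  have e : r = (r - q * m) + q * m := by omega
  conv_lhs => rw [e]
  rw [Nat.add_mul_mod_self_right]
  exact Nat.mod_eq_of_lt (by omega)

lemma colW_ne_within (n a b r s : ℕ) (ha : 1 ≤ a) (hb : b < n + 1)
    (hs1 : 1 ≤ s) (hsn : s ≤ n) (hrs : r + s < a * (n+1) + b * (n+2)) :
    colW n a r ≠ colW n a (r + s) := by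
  obtain ⟨a0, rfl⟩ : ∃ a0, a = a0 + 1 := ⟨a - 1, by omega⟩
  have e1 : (a0 + 1) * (n+1) = a0 * (n+1) + (n+1) := by ring
  intro h
  rw [colW, colW] at h
  split_ifs at h with h1 h2 h2
  · exact mod_ne_of_small (by omega) (by omega) h
  · -- r in u-region, r+s in v-region
    have hw : r % (n+1) = r - a0 * (n+1) := mod_window (by omega) (by omega)
    have hv : (r + s - (a0 + 1) * (n+1)) % (n+2) = r + s - (a0 + 1) * (n+1) :=
      Nat.mod_eq_of_lt (by omega)
    rw [hw, hv] at h
    omega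
  · omega
  · have e : r + s - (a0+1) * (n+1) = (r - (a0+1) * (n+1)) + s := by omega
    rw [e] at h
    exact mod_ne_of_small (by omega) (by omega : s < n + 2) h

lemma colW_ne_cross (n a b a' r s : ℕ) (ha : 1 ≤ a) (hb : b < n + 1) (ha' : 1 ≤ a')
    (hid : True) (hs1 : 1 ≤ s) (hsn : s ≤ n) (hr : r < a * (n+1) + b * (n+2))
    (hrs : a * (n+1) + b * (n+2) ≤ r + s) :
    colW n a r ≠ colW n a' (r + s - (a * (n+1) + b * (n+2))) := by
  obtain ⟨a0, rfl⟩ : ∃ a0, a = a0 + 1 := ⟨a - 1, by omega⟩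
  have e1 : (a0 + 1) * (n+1) = a0 * (n+1) + (n+1) := by ring
  have e2 : (n+1) ≤ a' * (n+1) := by
    calc n+1 = 1 * (n+1) := by ring
    _ ≤ a' * (n+1) := Nat.mul_le_mul_right _ ha'
  set L := (a0 + 1) * (n+1) + b * (n+2) with hL
  intro h
  rw [colW, colW] at h
  have hrr : r + s - L < a' * (n+1) := by omega
  rw [if_pos hrr] at h
  have hv' : (r + s - L) % (n+1) = r + s - L := Nat.mod_eq_of_lt (by omega)
  rw [hv'] at h
  split_ifs at h with h1
  · -- r in u-region of L : forces b = 0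
    have hb0 : b = 0 := by
      by_contra hb0
      have : n + 2 ≤ b * (n+2) := by
        calc n + 2 = 1 * (n+2) := by ring
        _ ≤ b * (n+2) := Nat.mul_le_mul_right _ (by omega)
      omega
    rw [hb0] at hL
    have hw : r % (n+1) = r - a0 * (n+1) := mod_window (by omega) (by omega)
    rw [hw] at h
    omega
  · obtain ⟨b0, rfl⟩ : ∃ b0, b = b0 + 1 := by
      refine ⟨b - 1, ?_⟩
      by_contra hb0
      have hbz : b = 0 := by omega
      rw [hbz] at hL
      omega
    have e3 : (b0 + 1) * (n+2) = b0 * (n+2) + (n+2) := by ring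
    have hw : (r - (a0+1) * (n+1)) % (n+2) = r - (a0+1) * (n+1) - b0 * (n+2) :=
      mod_window (by omega) (by omega)
    rw [hw] at h
    omega


lemma colF_ne_within (n : ℕ) {L r s : ℕ} (hL : (n+1) * (n+1) ≤ L)
    (hs1 : 1 ≤ s) (hsn : s ≤ n) (hrs : r + s < L) : colF n r L ≠ colF n (r + s) L := by
  obtain ⟨ha, hid⟩ := aL_spec n L hL
  intro h
  rw [colF, colF, Fin.mk.injEq] at h
  exact colW_ne_within n (aL n L) (L % (n+1)) r s ha (Nat.mod_lt _ (by omega)) hs1 hsn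
    (by omega) h

lemma colF_ne_cross (n : ℕ) {L L' r s : ℕ} (hL : (n+1) * (n+1) ≤ L)
    (hL' : (n+1) * (n+1) ≤ L') (hs1 : 1 ≤ s) (hsn : s ≤ n) (hr : r < L) (hrs : L ≤ r + s) :
    colF n r L ≠ colF n (r + s - L) L' := by
  obtain ⟨ha, hid⟩ := aL_spec n L hL
  obtain ⟨ha', hid'⟩ := aL_spec n L' hL'
  intro h
  rw [colF, colF, Fin.mk.injEq] at h
  have key := colW_ne_cross n (aL n L) (L % (n+1)) (aL n L') r s ha
    (Nat.mod_lt _ (by omega)) ha' trivial hs1 hsn (by omega) (by omega)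
  rw [hid] at key
  exact key h

lemma nX_pos (N : ℕ) (x : FSub) : 1 ≤ nX N x := (nX_spec N x).1

lemma measurable_rD (N : ℕ) : Measurable (rD N) := by
  refine measurable_to_countable' fun k => ?_
  classical
  have he : rD N ⁻¹' {k} = {x : FSub | shift (-(k:ℤ)) x.1 ∈ Markers N} ∩
      ⋂ j : ℕ, {x : FSub | j < k → shift (-(j:ℤ)) x.1 ∉ Markers N} := by
    ext x
    simp only [mem_preimage, mem_singleton_iff, mem_inter_iff, mem_iInter, mem_setOf_eq]
    rw [rD, Nat.find_eq_iff]
  rw [he]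
  refine MeasurableSet.inter ?_ (MeasurableSet.iInter fun j => ?_)
  · exact ((measurable_shift _).comp measurable_subtype_coe) (measurableSet_markers N)
  · by_cases hj : j < k
    · have : {x : FSub | j < k → shift (-(j:ℤ)) x.1 ∉ Markers N}
          = (fun x : FSub => shift (-(j:ℤ)) x.1) ⁻¹' (Markers N)ᶜ := by
        ext x; simp [hj]
      rw [this]
      exact ((measurable_shift _).comp measurable_subtype_coe) (measurableSet_markers N).compl
    · have : {x : FSub | j < k → shift (-(j:ℤ)) x.1 ∉ Markers N} = univ := by
        ext x; simp [hj]
      rw [this]; exact MeasurableSet.univ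

lemma measurable_nX (N : ℕ) : Measurable (nX N) := by
  refine measurable_to_countable' fun k => ?_
  classical
  have he : nX N ⁻¹' {k} = ({x : FSub | shift ((k:ℕ):ℤ) x.1 ∈ Markers N} ∩
      ⋂ j : ℕ, {x : FSub | 1 ≤ j → j < k → shift ((j:ℕ):ℤ) x.1 ∉ Markers N}) ∩
      {x : FSub | 1 ≤ k} := by
    ext x
    simp only [mem_preimage, mem_singleton_iff, mem_inter_iff, mem_iInter, mem_setOf_eq]
    rw [nX, Nat.find_eq_iff]
    constructor
    · rintro ⟨⟨hk1, h1⟩, h2⟩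
      exact ⟨⟨h1, fun j hj1 hj2 hmem => h2 j hj2 ⟨hj1, hmem⟩⟩, hk1⟩
    · rintro ⟨⟨h1, h2⟩, hk1⟩
      exact ⟨⟨hk1, h1⟩, fun j hj hPj => h2 j hPj.1 hj hPj.2⟩
  rw [he]
  refine MeasurableSet.inter (MeasurableSet.inter ?_ (MeasurableSet.iInter fun j => ?_)) ?_
  · exact ((measurable_shift _).comp measurable_subtype_coe) (measurableSet_markers N)
  · by_cases hj : 1 ≤ j ∧ j < k
    · have : {x : FSub | 1 ≤ j → j < k → shift ((j:ℕ):ℤ) x.1 ∉ Markers N}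
          = (fun x : FSub => shift ((j:ℕ):ℤ) x.1) ⁻¹' (Markers N)ᶜ := by
        ext x; simp [hj.1, hj.2]
      rw [this]
      exact ((measurable_shift _).comp measurable_subtype_coe) (measurableSet_markers N).compl
    · have : {x : FSub | 1 ≤ j → j < k → shift ((j:ℕ):ℤ) x.1 ∉ Markers N} = univ := by
        ext x
        simp only [mem_setOf_eq, mem_univ, iff_true]
        intro h1 h2
        exact absurd ⟨h1, h2⟩ hj
      rw [this]; exact MeasurableSet.univ
  · by_cases hk : 1 ≤ k
    · have : {x : FSub | 1 ≤ k} = univ := by ext x; simp [hk]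
      rw [this]; exact MeasurableSet.univ
    · have : {x : FSub | 1 ≤ k} = ∅ := by ext x; simp [hk]
      rw [this]; exact MeasurableSet.empty

/-- the (n+2)-coloring -/
noncomputable def theColoring (n : ℕ) : FSub → Fin (n + 2) :=
  fun x => colF n (rD (n*n + 2*n) x) (LG (n*n + 2*n) x)

lemma theColoring_is (n : ℕ) (hn : 1 ≤ n) :
    IsBorelColoring (Finset.Icc 1 n) (theColoring n) := by
  set N := n*n + 2*n with hN
  constructor
  · have : theColoring n = (fun p : ℕ × ℕ => colF n p.1 p.2) ∘
        (fun x => (rD N x, LG N x)) := rfl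
    rw [this]
    exact (measurable_of_countable _).comp ((measurable_rD N).prodMk
      ((measurable_rD N).add (measurable_nX N)))
  · intro x a ha h
    rw [Finset.mem_Icc] at ha
    have hxe : (⟨shift (a : ℤ) x.1, h⟩ : FSub) = shiftS (a : ℤ) x := rfl
    rw [hxe]
    have hLx : (n+1) * (n+1) ≤ LG N x := by
      have := LG_gt N x
      have e : (n+1) * (n+1) = N + 1 := by rw [hN]; ring
      omega
    have hLx' : (n+1) * (n+1) ≤ LG N (shiftS (a : ℤ) x) := by
      have := LG_gt N (shiftS (a : ℤ) x)
      have e : (n+1) * (n+1) = N + 1 := by rw [hN]; ring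
      omega
    have hLeq : LG N x = rD N x + nX N x := rfl
    rcases lt_or_ge (a : ℕ) (nX N x) with hcase | hcase
    · -- within the gap
      have h1 : rD N (shiftS (a : ℤ) x) = rD N x + a := rD_shift_lt N x hcase
      have h2 : nX N (shiftS (a : ℤ) x) = nX N x - a := nX_shift_lt N x hcase
      have h3 : LG N (shiftS (a : ℤ) x) = LG N x := by
        have : LG N (shiftS (a : ℤ) x) = rD N (shiftS (a : ℤ) x) + nX N (shiftS (a : ℤ) x) :=
          rfl
        rw [this, h1, h2, hLeq]
        omega
      show theColoring n x ≠ theColoring n (shiftS (a : ℤ) x)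
      rw [theColoring, theColoring]
      simp only [← hN, h1, h3]
      exact colF_ne_within n hLx ha.1 ha.2 (by omega)
    · -- crossing the marker
      have haN : (a : ℕ) ≤ N := by rw [hN]; nlinarith [ha.2]
      have h1 : rD N (shiftS (a : ℤ) x) = a - nX N x := rD_shift_ge N x hcase haN
      show theColoring n x ≠ theColoring n (shiftS (a : ℤ) x)
      rw [theColoring, theColoring]
      simp only [← hN, h1]
      have he : (a : ℕ) - nX N x = rD N x + a - LG N x := by
        rw [hLeq]; omega
      rw [he]
      exact colF_ne_cross n hLx hLx' ha.1 ha.2 (by rw [hLeq]; have := nX_pos N x; omega)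
        (by rw [hLeq]; omega)


end Aux

/-- For every `n ≥ 1`, `χ(1, 2, …, n) = n + 2`: there is a Borel
proper `(n+2)`-coloring of `G_S` on `F(2^ℤ)` for `S = {±1, …, ±n}`, but no Borel
proper `(n+1)`-coloring. -/
theorem borelChromatic_interval (n : ℕ) (hn : 1 ≤ n) :
    borelChromatic (Finset.Icc 1 n) = n + 2 ∧
    (∃ c : {x : ℤ → Bool // x ∈ FreePart} → Fin (n + 2),
        IsBorelColoring (Finset.Icc 1 n) c) ∧
    ¬ ∃ c : {x : ℤ → Bool // x ∈ FreePart} → Fin (n + 1),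
        IsBorelColoring (Finset.Icc 1 n) c := by
  have hex : ∃ c : FSub → Fin (n + 2), IsBorelColoring (Finset.Icc 1 n) c :=
    ⟨theColoring n, theColoring_is n hn⟩
  have hno : ¬ ∃ c : FSub → Fin (n + 1), IsBorelColoring (Finset.Icc 1 n) c :=
    no_coloring hn
  refine ⟨?_, hex, hno⟩
  have hnotmem : ∀ m, m < n + 2 →
      ¬ ∃ c : FSub → Fin m, IsBorelColoring (Finset.Icc 1 n) c := by
    rintro m hm ⟨c, hc⟩
    apply hno
    have hle : m ≤ n + 1 := by omega
    refine ⟨(Fin.castLE hle) ∘ c, ?_, ?_⟩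
    · exact (measurable_of_countable _).comp hc.1
    · intro x a ha h heq
      exact hc.2 x a ha h (Fin.castLE_injective hle heq)
  apply le_antisymm
  · exact Nat.sInf_le hex
  · by_contra hlt
    push_neg at hlt
    have hmem := Nat.sInf_mem (⟨n + 2, hex⟩ :
      {k : ℕ | ∃ c : FSub → Fin k, IsBorelColoring (Finset.Icc 1 n) c}.Nonempty)
    exact hnotmem _ hlt hmem
end
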